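/- arXiv:1708.04881 — 2 statements merged into one kernel-verified Lean document; each statement's English description precedes it below -/
import Mathlib

section
/- For every F ⊆ E, f_{w,d}(F) = min_{X ⊆ N_F} ( f_w(E_X ∩ F) + d(N_F \ X) ), where d(Y) := Σ_{i∈Y} d_i. -/
open Finset
set_option linter.unusedSectionVars false

noncomputable section

namespace TwoSidedMarket

variable {B S : Type*} [Fintype B] [Fintype S] [DecidableEq B] [DecidableEq S]

/-- A function `f` on subsets of a ground set `G` is monotone submodular:
`f ∅ = 0`, monotone on subsets of `G`, and submodular on subsets of `G`. -/
def IsMonoSubmodular {α : Type*} [DecidableEq α] (G : Finset α) (f : Finset α → ℝ) : Prop :=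
  f ∅ = 0 ∧ (∀ A B : Finset α, A ⊆ B → B ⊆ G → f A ≤ f B) ∧
    ∀ A B : Finset α, A ⊆ G → B ⊆ G → f (A ∩ B) + f (A ∪ B) ≤ f A + f B

/-- Monotone submodular, without the requirement of vanishing at `∅`. -/
def IsMonoSubmodularWeak {α : Type*} [DecidableEq α] (G : Finset α) (f : Finset α → ℝ) : Prop :=
  (∀ A B : Finset α, A ⊆ B → B ⊆ G → f A ≤ f B) ∧
    ∀ A B : Finset α, A ⊆ G → B ⊆ G → f (A ∩ B) + f (A ∪ B) ≤ f A + f B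

/-- `E_i`: the edges of `E` incident to buyer `i`. -/
def Ei (E : Finset (B × S)) (i : B) : Finset (B × S) := E.filter fun e => e.1 = i

/-- `E_j`: the edges of `E` incident to seller `j`. -/
def Ej (E : Finset (B × S)) (j : S) : Finset (B × S) := E.filter fun e => e.2 = j

/-- `E_X`: the edges of `E` incident to some buyer in `X`. -/
def EX (E : Finset (B × S)) (X : Finset B) : Finset (B × S) := E.filter fun e => e.1 ∈ X

/-- `N_F`: the buyers incident to some edge of `F`. -/
def NF (F : Finset (B × S)) : Finset B := F.image Prod.fst

/-- `x(F) = Σ_{e ∈ F} x e`. -/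
def vsum (x : B × S → ℝ) (F : Finset (B × S)) : ℝ := ∑ e ∈ F, x e

/-- Membership `w ∈ P = ⊕_j P_j`: `w` is nonnegative, supported on `E`, and
`w|_{E_j} ∈ P_j` for every seller `j`. -/
def memP (E : Finset (B × S)) (fj : S → Finset (B × S) → ℝ) (w : B × S → ℝ) : Prop :=
  (∀ e, 0 ≤ w e) ∧ (∀ e ∉ E, w e = 0) ∧ ∀ j : S, ∀ F ⊆ Ej E j, vsum w F ≤ fj j F

/-- `f(F) := Σ_{j ∈ M} f_j (E_j ∩ F)`. -/
def fTot (E : Finset (B × S)) (fj : S → Finset (B × S) → ℝ) (F : Finset (B × S)) : ℝ :=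
  ∑ j : S, fj j (Ej E j ∩ F)

/-- `f_w(F) := min_{F ⊆ F' ⊆ E} (f(F') - w(F'))`. -/
def fw (E : Finset (B × S)) (fj : S → Finset (B × S) → ℝ)
    (w : B × S → ℝ) (F : Finset (B × S)) : ℝ :=
  sInf {r : ℝ | ∃ F' : Finset (B × S), F ⊆ F' ∧ F' ⊆ E ∧ r = fTot E fj F' - vsum w F'}

/-- Membership in the remnant supply polytope `P_{w,d}`. -/
def memPwd (E : Finset (B × S)) (fj : S → Finset (B × S) → ℝ)
    (w : B × S → ℝ) (d : B → ℝ) (x : B × S → ℝ) : Prop :=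
  (∀ e, 0 ≤ x e) ∧ (∀ e ∉ E, x e = 0) ∧ memP E fj (w + x) ∧
    ∀ i : B, vsum x (Ei E i) ≤ d i

/-- `f_{w,d}(F) := max_{x ∈ P_{w,d}} x(F)`. -/
def fwd (E : Finset (B × S)) (fj : S → Finset (B × S) → ℝ)
    (w : B × S → ℝ) (d : B → ℝ) (F : Finset (B × S)) : ℝ :=
  sSup {r : ℝ | ∃ x : B × S → ℝ, memPwd E fj w d x ∧ r = vsum x F}

/-- `P^i_{w,d}(ξ)`: the remnant supply polytope of the buyers other than `i`,
given that buyer `i` receives `ξ`.  (Vectors indexed by `N - i` are encoded as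
functions on all of `B` vanishing at `i`.) -/
def PiWd (E : Finset (B × S)) (fj : S → Finset (B × S) → ℝ)
    (w : B × S → ℝ) (d : B → ℝ) (i : B) (ξ : B × S → ℝ) : Set (B → ℝ) :=
  {u | u i = 0 ∧ (∀ k, 0 ≤ u k) ∧
    ∃ x : B × S → ℝ, memPwd E fj w d x ∧ (∀ e ∈ Ei E i, x e = ξ e) ∧
      ∀ k : B, k ≠ i → vsum x (Ei E k) = u k}

/-- The clinching polytope `P^i_{w,d}` of buyer `i`:
all `ξ ∈ ℝ_{≥0}^{E_i}` with `P^i_{w,d}(ξ) = P^i_{w,d}(0)`. -/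
def ClinchP (E : Finset (B × S)) (fj : S → Finset (B × S) → ℝ)
    (w : B × S → ℝ) (d : B → ℝ) (i : B) : Set (B × S → ℝ) :=
  {ξ | (∀ e, 0 ≤ ξ e) ∧ (∀ e ∉ Ei E i, ξ e = 0) ∧
    PiWd E fj w d i ξ = PiWd E fj w d i 0}


----------------------------------------------------------------
-- basic vsum lemmas

lemma vsum_nonneg {x : B × S → ℝ} (hx : ∀ e, 0 ≤ x e) (G : Finset (B × S)) : 0 ≤ vsum x G :=
  Finset.sum_nonneg fun e _ => hx e

lemma vsum_mono {x : B × S → ℝ} (hx : ∀ e, 0 ≤ x e) {G H : Finset (B × S)} (h : G ⊆ H) :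
    vsum x G ≤ vsum x H :=
  Finset.sum_le_sum_of_subset_of_nonneg h fun e _ _ => hx e

lemma vsum_add (x y : B × S → ℝ) (G : Finset (B × S)) :
    vsum (x + y) G = vsum x G + vsum y G := by
  simp [vsum, Finset.sum_add_distrib]

lemma vsum_union_inter (x : B × S → ℝ) (G H : Finset (B × S)) :
    vsum x (G ∪ H) + vsum x (G ∩ H) = vsum x G + vsum x H :=
  Finset.sum_union_inter

lemma vsum_sdiff {G H : Finset (B × S)} (h : G ⊆ H) (x : B × S → ℝ) :
    vsum x (H \ G) + vsum x G = vsum x H :=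
  Finset.sum_sdiff h

/-- if `x` vanishes outside `F`, a sum over `G` equals the sum over `G ∩ F`. -/
lemma vsum_supp {x : B × S → ℝ} {F : Finset (B × S)} (hs : ∀ e ∉ F, x e = 0)
    (G : Finset (B × S)) : vsum x G = vsum x (G ∩ F) := by
  refine (Finset.sum_subset inter_subset_left fun e he hne => ?_).symm
  exact hs e fun hF => hne (mem_inter.2 ⟨he, hF⟩)

----------------------------------------------------------------
-- fw as a finite minimum

variable (E : Finset (B × S)) (fj : S → Finset (B × S) → ℝ) (w : B × S → ℝ)

def cand (G : Finset (B × S)) : Finset (Finset (B × S)) :=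
  E.powerset.filter fun F' => G ⊆ F'

lemma cand_nonempty {G : Finset (B × S)} (hG : G ⊆ E) : (cand E G).Nonempty :=
  ⟨E, by simp [cand, hG]⟩

lemma fw_eq_inf' {G : Finset (B × S)} (hG : G ⊆ E) :
    fw E fj w G = (cand E G).inf' (cand_nonempty E hG)
      (fun F' => fTot E fj F' - vsum w F') := by
  rw [Finset.inf'_eq_csInf_image]
  apply congrArg sInf
  ext r
  constructor
  · rintro ⟨F', h1, h2, h3⟩
    exact ⟨F', by simp [cand, h1, h2], h3.symm⟩
  · rintro ⟨F', hF', h3⟩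
    simp only [cand, mem_coe, mem_filter, mem_powerset] at hF'
    exact ⟨F', hF'.2, hF'.1, h3.symm⟩

lemma fw_le {G F' : Finset (B × S)} (hGF : G ⊆ F') (hFE : F' ⊆ E) :
    fw E fj w G ≤ fTot E fj F' - vsum w F' := by
  rw [fw_eq_inf' E fj w (hGF.trans hFE)]
  exact Finset.inf'_le _ (by simp [cand, hGF, hFE])

lemma le_fw {G : Finset (B × S)} (hG : G ⊆ E) {c : ℝ}
    (h : ∀ F', G ⊆ F' → F' ⊆ E → c ≤ fTot E fj F' - vsum w F') :
    c ≤ fw E fj w G := by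
  rw [fw_eq_inf' E fj w hG]
  refine Finset.le_inf' _ _ fun F' hF' => ?_
  simp only [cand, mem_filter, mem_powerset] at hF'
  exact h F' hF'.2 hF'.1

lemma fw_exists_min {G : Finset (B × S)} (hG : G ⊆ E) :
    ∃ F', G ⊆ F' ∧ F' ⊆ E ∧ fw E fj w G = fTot E fj F' - vsum w F' := by
  rw [fw_eq_inf' E fj w hG]
  obtain ⟨F', hF', heq⟩ := Finset.exists_mem_eq_inf' (cand_nonempty E hG)
    (fun F' => fTot E fj F' - vsum w F')
  simp only [cand, mem_filter, mem_powerset] at hF'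
  exact ⟨F', hF'.2, hF'.1, heq⟩

section Part2
variable (E : Finset (B × S)) (fj : S → Finset (B × S) → ℝ) (w : B × S → ℝ) (d : B → ℝ)
variable (hfj : ∀ j : S, IsMonoSubmodular (Ej E j) (fj j))

include hfj

lemma fTot_empty : fTot E fj ∅ = 0 := by
  simp only [fTot, inter_empty]
  exact Finset.sum_eq_zero fun j _ => (hfj j).1

lemma fTot_mono {A C : Finset (B × S)} (h : A ⊆ C) : fTot E fj A ≤ fTot E fj C := by
  refine Finset.sum_le_sum fun j _ => (hfj j).2.1 _ _ ?_ inter_subset_left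
  exact inter_subset_inter le_rfl h

lemma fTot_submod (A C : Finset (B × S)) :
    fTot E fj (A ∩ C) + fTot E fj (A ∪ C) ≤ fTot E fj A + fTot E fj C := by
  rw [fTot, fTot, fTot, fTot, ← Finset.sum_add_distrib, ← Finset.sum_add_distrib]
  refine Finset.sum_le_sum fun j _ => ?_
  have h1 : Ej E j ∩ (A ∩ C) = (Ej E j ∩ A) ∩ (Ej E j ∩ C) := by
    ext e; simp [mem_inter]; tauto
  have h2 : Ej E j ∩ (A ∪ C) = (Ej E j ∩ A) ∪ (Ej E j ∩ C) := by
    ext e; simp [mem_inter, mem_union]; tauto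
  rw [h1, h2]
  exact (hfj j).2.2 _ _ inter_subset_left inter_subset_left

omit hfj

/-- decomposing a subset of `E` along sellers. -/
lemma vsum_seller_fiber {F' : Finset (B × S)} (hF' : F' ⊆ E) (x : B × S → ℝ) :
    ∑ j : S, vsum x (Ej E j ∩ F') = vsum x F' := by
  have : ∀ j : S, Ej E j ∩ F' = F'.filter fun e => e.2 = j := by
    intro j; ext e
    simp only [Ej, mem_inter, mem_filter]
    exact ⟨fun h => ⟨h.2, h.1.2⟩, fun h => ⟨⟨hF' h.1, h.2⟩, h.1⟩⟩
  simp only [this, vsum]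
  exact Finset.sum_fiberwise_of_maps_to (fun e _ => mem_univ e.2) x

include hfj

variable (hw : memP E fj w)
include hw

lemma memP_vsum_le {F' : Finset (B × S)} (hF' : F' ⊆ E) : vsum w F' ≤ fTot E fj F' := by
  rw [← vsum_seller_fiber E hF' w, fTot]
  exact Finset.sum_le_sum fun j _ => hw.2.2 j _ inter_subset_left

lemma fw_nonneg {G : Finset (B × S)} (hG : G ⊆ E) : 0 ≤ fw E fj w G :=
  le_fw E fj w hG fun F' _ hFE => sub_nonneg.2 (memP_vsum_le E fj w hfj hw hFE)

lemma fw_empty : fw E fj w ∅ = 0 := by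
  refine le_antisymm ?_ (fw_nonneg E fj w hfj hw (empty_subset E))
  have := fw_le E fj w (empty_subset ∅) (empty_subset E)
  simpa [fTot_empty E fj hfj, vsum] using this

lemma fw_mono {G G' : Finset (B × S)} (h : G ⊆ G') (hG' : G' ⊆ E) :
    fw E fj w G ≤ fw E fj w G' := by
  obtain ⟨F', h1, h2, h3⟩ := fw_exists_min E fj w hG'
  rw [h3]
  exact fw_le E fj w (h.trans h1) h2

lemma fw_submod {A C : Finset (B × S)} (hA : A ⊆ E) (hC : C ⊆ E) :
    fw E fj w (A ∩ C) + fw E fj w (A ∪ C) ≤ fw E fj w A + fw E fj w C := by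
  obtain ⟨FA, hA1, hA2, hA3⟩ := fw_exists_min E fj w hA
  obtain ⟨FC, hC1, hC2, hC3⟩ := fw_exists_min E fj w hC
  have h1 : fw E fj w (A ∩ C) ≤ fTot E fj (FA ∩ FC) - vsum w (FA ∩ FC) :=
    fw_le E fj w (inter_subset_inter hA1 hC1) (inter_subset_left.trans hA2)
  have h2 : fw E fj w (A ∪ C) ≤ fTot E fj (FA ∪ FC) - vsum w (FA ∪ FC) :=
    fw_le E fj w (union_subset_union hA1 hC1) (union_subset hA2 hC2)
  have h3 := fTot_submod E fj hfj FA FC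
  have h4 := vsum_union_inter w FA FC
  rw [hA3, hC3]
  linarith

/-- feasibility implies all polymatroid constraints w.r.t. `fw`. -/
lemma vsum_le_fw {x : B × S → ℝ} (hx : memPwd E fj w d x) {G : Finset (B × S)}
    (hG : G ⊆ E) : vsum x G ≤ fw E fj w G := by
  refine le_fw E fj w hG fun F' hGF hFE => ?_
  have h1 : vsum x G ≤ vsum x F' := vsum_mono hx.1 hGF
  have h2 : vsum w F' + vsum x F' ≤ fTot E fj F' := by
    have := memP_vsum_le E fj (w + x) hfj hx.2.2.1 hFE
    rwa [vsum_add] at this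
  linarith

/-- building a feasible point from constraints on subsets of `F`. -/
lemma mk_memPwd {F : Finset (B × S)} (hF : F ⊆ E) {x : B × S → ℝ}
    (hx0 : ∀ e, 0 ≤ x e) (hsupp : ∀ e ∉ F, x e = 0)
    (hfw : ∀ G ⊆ F, vsum x G ≤ fw E fj w G)
    (hcap : ∀ i, vsum x (Ei E i) ≤ d i) : memPwd E fj w d x := by
  refine ⟨hx0, fun e he => hsupp e fun h => he (hF h), ⟨?_, ?_, ?_⟩, hcap⟩
  · intro e; exact add_nonneg (hw.1 e) (hx0 e)
  · intro e he
    simp only [Pi.add_apply, hw.2.1 e he, hsupp e fun h => he (hF h), add_zero]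
  · intro j F'' hF''
    have hF''E : F'' ⊆ E := hF''.trans (filter_subset _ _)
    have hxF'' : vsum x F'' ≤ fTot E fj F'' - vsum w F'' := by
      calc vsum x F'' = vsum x (F'' ∩ F) := vsum_supp hsupp F''
        _ ≤ fw E fj w (F'' ∩ F) := hfw _ inter_subset_right
        _ ≤ fTot E fj F'' - vsum w F'' := fw_le E fj w inter_subset_left hF''E
    have hfTot : fTot E fj F'' = fj j F'' := by
      rw [fTot]
      rw [Finset.sum_eq_single j]
      · congr 1
        exact inter_eq_right.2 hF''
      · intro j' _ hj'
        have : Ej E j' ∩ F'' = ∅ := by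
          rw [eq_empty_iff_forall_notMem]
          intro e he
          rw [mem_inter] at he
          have h1 : e.2 = j' := (mem_filter.1 he.1).2
          have h2 : e.2 = j := (mem_filter.1 (hF'' he.2)).2
          exact hj' (h1 ▸ h2)
        rw [this]; exact (hfj j').1
      · intro h; exact absurd (mem_univ j) h
    rw [vsum_add]
    rw [hfTot] at hxF''
    linarith

end Part2

section Part3
variable (E : Finset (B × S)) (fj : S → Finset (B × S) → ℝ) (w : B × S → ℝ) (d : B → ℝ)

/-- decomposing a sum over `G ⊆ E` along buyers in `Y ⊇ NF G`. -/
lemma vsum_buyer_fiber {G : Finset (B × S)} {Y : Finset B} (hY : ∀ e ∈ G, e.1 ∈ Y)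
    (x : B × S → ℝ) :
    ∑ i ∈ Y, vsum x (G.filter fun e => e.1 = i) = vsum x G := by
  simp only [vsum]
  exact Finset.sum_fiberwise_of_maps_to hY x

lemma filter_buyer_subset_Ei {G : Finset (B × S)} (hG : G ⊆ E) (i : B) :
    (G.filter fun e => e.1 = i) ⊆ Ei E i := fun e he => by
  rw [mem_filter] at he; exact mem_filter.2 ⟨hG he.1, he.2⟩

variable (hfj : ∀ j : S, IsMonoSubmodular (Ej E j) (fj j))
variable (hw : memP E fj w) (hd : ∀ i : B, 0 ≤ d i)
variable {F : Finset (B × S)} (hF : F ⊆ E)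

include hfj hw hF in
/-- The easy direction: every feasible value is at most every cut value. -/
lemma feas_le_cut {x : B × S → ℝ} (hx : memPwd E fj w d x) {X : Finset B}
    (hX : X ⊆ NF F) :
    vsum x F ≤ fw E fj w (EX E X ∩ F) + ∑ k ∈ NF F \ X, d k := by
  have hsub : EX E X ∩ F ⊆ F := inter_subset_right
  have hsplit := vsum_sdiff hsub x
  have h1 : vsum x (EX E X ∩ F) ≤ fw E fj w (EX E X ∩ F) :=
    vsum_le_fw E fj w d hfj hw hx (inter_subset_left.trans (filter_subset _ _))
  have h2 : vsum x (F \ (EX E X ∩ F)) ≤ ∑ k ∈ NF F \ X, d k := by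
    have hmap : ∀ e ∈ F \ (EX E X ∩ F), e.1 ∈ NF F \ X := by
      intro e he
      rw [mem_sdiff] at he
      refine mem_sdiff.2 ⟨mem_image_of_mem Prod.fst he.1, fun hX1 => he.2 ?_⟩
      exact mem_inter.2 ⟨mem_filter.2 ⟨hF he.1, hX1⟩, he.1⟩
    rw [← vsum_buyer_fiber hmap x]
    refine Finset.sum_le_sum fun i hi => ?_
    calc vsum x ((F \ (EX E X ∩ F)).filter fun e => e.1 = i)
        ≤ vsum x (Ei E i) := vsum_mono hx.1
          (filter_buyer_subset_Ei E ((sdiff_subset).trans hF) i)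
      _ ≤ d i := hx.2.2.2 i
  linarith

end Part3

section Part4
variable (E : Finset (B × S)) (fj : S → Finset (B × S) → ℝ) (w : B × S → ℝ) (d : B → ℝ)
variable (hfj : ∀ j : S, IsMonoSubmodular (Ej E j) (fj j))
variable (hw : memP E fj w) (hd : ∀ i : B, 0 ≤ d i)
variable (F : Finset (B × S)) (hF : F ⊆ E)

/-- the feasible region restricted to vectors supported on `F`. -/
def K : Set (B × S → ℝ) := {x | memPwd E fj w d x ∧ ∀ e ∉ F, x e = 0}

include hw hd in
lemma K_zero_mem : (0 : B × S → ℝ) ∈ K E fj w d F := by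
  refine ⟨⟨fun e => le_rfl, fun e _ => rfl, by simpa using hw, fun i => ?_⟩, fun e _ => rfl⟩
  · simpa [vsum] using hd i

lemma K_isClosed : IsClosed (K E fj w d F) := by
  have hv : ∀ G : Finset (B × S), Continuous fun x : B × S → ℝ => vsum x G := fun G =>
    continuous_finset_sum G fun e _ => continuous_apply e
  have h1 : IsClosed {x : B × S → ℝ | ∀ e, 0 ≤ x e} := by
    have he : {x : B × S → ℝ | ∀ e, 0 ≤ x e} = ⋂ e, {x | 0 ≤ x e} := by ext x; simp
    rw [he]
    exact isClosed_iInter fun e => isClosed_le continuous_const (continuous_apply e)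
  have h2 : IsClosed {x : B × S → ℝ | ∀ e ∉ E, x e = 0} := by
    have he : {x : B × S → ℝ | ∀ e ∉ E, x e = 0}
        = ⋂ e, ⋂ (_ : e ∉ E), {x | x e = 0} := by ext x; simp
    rw [he]
    exact isClosed_iInter fun e => isClosed_iInter fun _ =>
      isClosed_eq (continuous_apply e) continuous_const
  have h3 : IsClosed {x : B × S → ℝ | ∀ e, 0 ≤ (w + x) e} := by
    have he : {x : B × S → ℝ | ∀ e, 0 ≤ (w + x) e}
        = ⋂ e, {x : B × S → ℝ | 0 ≤ w e + x e} := by ext x; simp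
    rw [he]
    exact isClosed_iInter fun e =>
      isClosed_le continuous_const ((continuous_const.add (continuous_apply e)))
  have h4 : IsClosed {x : B × S → ℝ | ∀ e ∉ E, (w + x) e = 0} := by
    have he : {x : B × S → ℝ | ∀ e ∉ E, (w + x) e = 0}
        = ⋂ e, ⋂ (_ : e ∉ E), {x : B × S → ℝ | w e + x e = 0} := by ext x; simp
    rw [he]
    exact isClosed_iInter fun e => isClosed_iInter fun _ =>
      isClosed_eq (continuous_const.add (continuous_apply e)) continuous_const
  have h5 : IsClosed {x : B × S → ℝ | ∀ j : S, ∀ G ⊆ Ej E j, vsum (w + x) G ≤ fj j G} := by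
    have he : {x : B × S → ℝ | ∀ j : S, ∀ G ⊆ Ej E j, vsum (w + x) G ≤ fj j G}
        = ⋂ (j : S), ⋂ (G : Finset (B × S)), ⋂ (_ : G ⊆ Ej E j),
            {x | vsum (w + x) G ≤ fj j G} := by ext x; simp
    rw [he]
    refine isClosed_iInter fun j => isClosed_iInter fun G => isClosed_iInter fun _ => ?_
    have hc : Continuous fun x : B × S → ℝ => vsum (w + x) G := by
      simpa [vsum_add] using
        (show Continuous fun x : B × S → ℝ => vsum w G + vsum x G from continuous_const.add (hv G))
    exact isClosed_le hc continuous_const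
  have h6 : IsClosed {x : B × S → ℝ | ∀ i : B, vsum x (Ei E i) ≤ d i} := by
    have he : {x : B × S → ℝ | ∀ i : B, vsum x (Ei E i) ≤ d i}
        = ⋂ (i : B), {x | vsum x (Ei E i) ≤ d i} := by ext x; simp
    rw [he]
    exact isClosed_iInter fun i => isClosed_le (hv _) continuous_const
  have h7 : IsClosed {x : B × S → ℝ | ∀ e ∉ F, x e = 0} := by
    have he : {x : B × S → ℝ | ∀ e ∉ F, x e = 0}
        = ⋂ e, ⋂ (_ : e ∉ F), {x | x e = 0} := by ext x; simp
    rw [he]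
    exact isClosed_iInter fun e => isClosed_iInter fun _ =>
      isClosed_eq (continuous_apply e) continuous_const
  have : K E fj w d F = {x : B × S → ℝ | ∀ e, 0 ≤ x e} ∩ ({x | ∀ e ∉ E, x e = 0} ∩
      ({x | ∀ e, 0 ≤ (w + x) e} ∩ ({x | ∀ e ∉ E, (w + x) e = 0} ∩
      ({x | ∀ j : S, ∀ G ⊆ Ej E j, vsum (w + x) G ≤ fj j G} ∩
      ({x | ∀ i : B, vsum x (Ei E i) ≤ d i} ∩ {x | ∀ e ∉ F, x e = 0}))))) := by
    ext x
    simp only [K, memPwd, memP, Set.mem_setOf_eq, Set.mem_inter_iff]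
    tauto
  rw [this]
  exact h1.inter (h2.inter (h3.inter (h4.inter (h5.inter (h6.inter h7)))))

include hfj hw hF in
lemma K_isCompact : IsCompact (K E fj w d F) := by
  classical
  set M : B × S → ℝ := fun e => if e ∈ F then fw E fj w {e} else 0 with hM
  have hsub : K E fj w d F ⊆ Set.univ.pi fun e => Set.Icc 0 (M e) := by
    intro x hx
    intro e _
    simp only [Set.mem_Icc]
    refine ⟨hx.1.1 e, ?_⟩
    by_cases he : e ∈ F
    · have h1 : vsum x {e} ≤ fw E fj w {e} :=
        vsum_le_fw E fj w d hfj hw hx.1 (by simpa using hF he)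
      simpa [vsum, hM, he] using h1
    · simp [hM, he, hx.2 e he]
  exact IsCompact.of_isClosed_subset
    (isCompact_univ_pi fun e => isCompact_Icc) (K_isClosed E fj w d F) hsub

include hfj hw hd hF in
lemma exists_max :
    ∃ x ∈ K E fj w d F, ∀ y ∈ K E fj w d F, vsum y F ≤ vsum x F := by
  obtain ⟨x, hxK, hmax⟩ := (K_isCompact E fj w d hfj hw F hF).exists_isMaxOn
    ⟨0, K_zero_mem E fj w d hw hd F⟩
    ((continuous_finset_sum F fun e _ => continuous_apply e).continuousOn)
  exact ⟨x, hxK, fun y hy => hmax hy⟩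

end Part4

section Part5
variable (E F : Finset (B × S)) (fj : S → Finset (B × S) → ℝ) (w : B × S → ℝ) (d : B → ℝ)

/-- a tight set for `x`: a subset of `F` where the polymatroid constraint is met
with equality. -/
def TightS (x : B × S → ℝ) (G : Finset (B × S)) : Prop :=
  G ⊆ F ∧ vsum x G = fw E fj w G

/-- `e` is saturated: it lies in some tight set. -/
def satS (x : B × S → ℝ) (e : B × S) : Prop := ∃ G, TightS E F fj w x G ∧ e ∈ G

variable (hfj : ∀ j : S, IsMonoSubmodular (Ej E j) (fj j))
variable (hw : memP E fj w) (hF : F ⊆ E)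

include hfj hw hF in
lemma tight_inter_union {x : B × S → ℝ} (hle : ∀ G ⊆ F, vsum x G ≤ fw E fj w G)
    {G H : Finset (B × S)} (hG : TightS E F fj w x G) (hH : TightS E F fj w x H) :
    TightS E F fj w x (G ∩ H) ∧ TightS E F fj w x (G ∪ H) := by
  have hGF : G ⊆ F := hG.1
  have hHF : H ⊆ F := hH.1
  have hUF : G ∪ H ⊆ F := union_subset hGF hHF
  have hIF : G ∩ H ⊆ F := inter_subset_left.trans hGF
  have h1 : vsum x (G ∩ H) ≤ fw E fj w (G ∩ H) := hle _ hIF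
  have h2 : vsum x (G ∪ H) ≤ fw E fj w (G ∪ H) := hle _ hUF
  have h3 := fw_submod E fj w hfj hw (hGF.trans hF) (hHF.trans hF)
  have h4 := vsum_union_inter x G H
  have h5 := hG.2
  have h6 := hH.2
  constructor
  · exact ⟨hIF, by linarith⟩
  · exact ⟨hUF, by linarith⟩

include hfj hw hF in
lemma exists_minimal_tight {x : B × S → ℝ} (hle : ∀ G ⊆ F, vsum x G ≤ fw E fj w G)
    {e : B × S} (hsat : satS E F fj w x e) :
    ∃ T, (TightS E F fj w x T ∧ e ∈ T) ∧ ∀ G, TightS E F fj w x G → e ∈ G → T ⊆ G := by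
  classical
  obtain ⟨G0, hG0, heG0⟩ := hsat
  set C : Finset (Finset (B × S)) :=
    F.powerset.filter (fun G => TightS E F fj w x G ∧ e ∈ G) with hC
  have hne : C.Nonempty := ⟨G0, by simp [hC, hG0, heG0, hG0.1]⟩
  obtain ⟨T, hTC, hTmin⟩ := Finset.exists_min_image C Finset.card hne
  simp only [hC, mem_filter, mem_powerset] at hTC
  refine ⟨T, ⟨hTC.2.1, hTC.2.2⟩, fun G hG heG => ?_⟩
  have hTG : TightS E F fj w x (T ∩ G) :=
    (tight_inter_union E F fj w hfj hw hF hle hTC.2.1 hG).1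
  have hmem : T ∩ G ∈ C := by
    simp [hC, hTG, hTG.1, mem_inter.2 ⟨hTC.2.2, heG⟩]
  have := hTmin _ hmem
  have heq : T ∩ G = T :=
    Finset.eq_of_subset_of_card_le inter_subset_left (by simpa using this)
  intro a ha
  rw [← heq] at ha
  exact (mem_inter.1 ha).2

open Classical in
/-- a choice of minimal tight set containing `e` (junk value if none). -/
def Tpick (x : B × S → ℝ) (e : B × S) : Finset (B × S) :=
  if h : ∃ T, (TightS E F fj w x T ∧ e ∈ T) ∧
      ∀ G, TightS E F fj w x G → e ∈ G → T ⊆ G then h.choose else ∅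

include hfj hw hF in
lemma Tpick_spec {x : B × S → ℝ} (hle : ∀ G ⊆ F, vsum x G ≤ fw E fj w G)
    {e : B × S} (hsat : satS E F fj w x e) :
    (TightS E F fj w x (Tpick E F fj w x e) ∧ e ∈ Tpick E F fj w x e) ∧
      ∀ G, TightS E F fj w x G → e ∈ G → Tpick E F fj w x e ⊆ G := by
  have h := exists_minimal_tight E F fj w hfj hw hF hle hsat
  rw [Tpick, dif_pos h]
  exact h.choose_spec

include hfj hw in
lemma tight_empty : TightS E F fj w x ∅ :=
  ⟨empty_subset F, by simp [vsum, fw_empty E fj w hfj hw]⟩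

include hfj hw hF in
/-- a finite union of tight sets is tight. -/
lemma tight_biUnion {x : B × S → ℝ} (hle : ∀ G ⊆ F, vsum x G ≤ fw E fj w G)
    (s : Finset (B × S)) (t : B × S → Finset (B × S))
    (ht : ∀ e ∈ s, TightS E F fj w x (t e)) :
    TightS E F fj w x (s.biUnion t) := by
  classical
  induction s using Finset.induction_on with
  | empty => simpa using tight_empty E F fj w hfj hw (x := x)
  | @insert a s ha IH =>
    rw [Finset.biUnion_insert]
    exact (tight_inter_union E F fj w hfj hw hF hle (ht a (mem_insert_self a s))
      (IH fun e he => ht e (mem_insert_of_mem he))).2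

end Part5

section Part6
variable (E F : Finset (B × S)) (fj : S → Finset (B × S) → ℝ) (w : B × S → ℝ) (d : B → ℝ)

/-- the augmenting-chain reachability predicate. -/
def reachJ (x : B × S → ℝ) : ℕ → B → Prop
  | 0, i => vsum x (Ei E i) < d i
  | m + 1, i => ∃ i' eo e', reachJ x m i' ∧ eo ∈ F ∧ eo.1 = i' ∧ satS E F fj w x eo ∧
      0 < x e' ∧ e'.1 = i ∧ ∀ G, TightS E F fj w x G → eo ∈ G → e' ∈ G

lemma vsum_single (x : B × S → ℝ) (e : B × S) (δ : ℝ) (G : Finset (B × S)) :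
    vsum (fun a => x a + if a = e then δ else 0) G
      = vsum x G + if e ∈ G then δ else 0 := by
  simp [vsum, Finset.sum_add_distrib, Finset.sum_ite_eq' G e (fun _ => δ)]

lemma vsum_swap (x : B × S → ℝ) (e e' : B × S) (δ : ℝ) (G : Finset (B × S)) :
    vsum (fun a => x a + (if a = e then δ else 0) - (if a = e' then δ else 0)) G
      = vsum x G + (if e ∈ G then δ else 0) - (if e' ∈ G then δ else 0) := by
  simp [vsum, Finset.sum_add_distrib, Finset.sum_sub_distrib,
    Finset.sum_ite_eq' G e (fun _ => δ), Finset.sum_ite_eq' G e' (fun _ => δ)]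

variable (hfj : ∀ j : S, IsMonoSubmodular (Ej E j) (fj j))
variable (hw : memP E fj w) (hd : ∀ i : B, 0 ≤ d i) (hF : F ⊆ E)

include hfj hw hF in
/-- positivity of the minimal slack over sets containing an unsaturated element. -/
lemma slack_pos {x : B × S → ℝ} (hle : ∀ G ⊆ F, vsum x G ≤ fw E fj w G)
    {e : B × S} (heF : e ∈ F) (hns : ¬ satS E F fj w x e) :
    ∃ δ₁ : ℝ, 0 < δ₁ ∧ ∀ G ⊆ F, e ∈ G → vsum x G + δ₁ ≤ fw E fj w G := by
  classical
  set 𝒢 : Finset (Finset (B × S)) := F.powerset.filter (fun G => e ∈ G) with h𝒢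
  have hne : 𝒢.Nonempty := ⟨{e}, by simp [h𝒢, singleton_subset_iff.2 heF]⟩
  refine ⟨𝒢.inf' hne (fun G => fw E fj w G - vsum x G), ?_, ?_⟩
  · rw [Finset.lt_inf'_iff]
    intro G hG
    simp only [h𝒢, mem_filter, mem_powerset] at hG
    have h1 := hle G hG.1
    have h2 : vsum x G ≠ fw E fj w G := fun h => hns ⟨G, ⟨hG.1, h⟩, hG.2⟩
    have := lt_of_le_of_ne h1 h2
    linarith
  · intro G hGF heG
    have : 𝒢.inf' hne (fun G => fw E fj w G - vsum x G) ≤ fw E fj w G - vsum x G :=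
      Finset.inf'_le _ (by simp [h𝒢, hGF, heG])
    linarith

include hfj hw hd hF in
/-- the swap construction: move mass from a positive saturated element `e'` to
an unsaturated element `e` of the same buyer. -/
lemma swap_lemma {x : B × S → ℝ} (hxK : x ∈ K E fj w d F)
    {e e' : B × S} (heF : e ∈ F) (he'F : e' ∈ F) (hne : e ≠ e')
    (h1e : e'.1 = e.1) (hns : ¬ satS E F fj w x e) (hpos : 0 < x e') :
    ∃ x' ∈ K E fj w d F,
      vsum x' F = vsum x F ∧
      (∀ G, TightS E F fj w x' G ↔ TightS E F fj w x G ∧ e' ∉ G) ∧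
      (∀ a, a ≠ e → 0 < x a → 0 < x' a) ∧
      (∀ k, vsum x' (Ei E k) = vsum x (Ei E k)) := by
  classical
  have hle : ∀ G ⊆ F, vsum x G ≤ fw E fj w G := fun G hG =>
    vsum_le_fw E fj w d hfj hw hxK.1 (hG.trans hF)
  obtain ⟨δ₁, hδ₁pos, hδ₁⟩ := slack_pos E F fj w hfj hw hF hle heF hns
  set δ : ℝ := min (δ₁ / 2) (x e' / 2) with hδdef
  have hδpos : 0 < δ := lt_min (by linarith) (by linarith)
  have hδlt1 : δ < δ₁ := lt_of_le_of_lt (min_le_left _ _) (by linarith)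
  have hδlt2 : δ < x e' := lt_of_le_of_lt (min_le_right _ _) (by linarith)
  set x' : B × S → ℝ :=
    fun a => x a + (if a = e then δ else 0) - (if a = e' then δ else 0) with hx'def
  have hvs : ∀ G, vsum x' G
      = vsum x G + (if e ∈ G then δ else 0) - (if e' ∈ G then δ else 0) :=
    vsum_swap x e e' δ
  have hEi : ∀ (a : B × S), a ∈ F → ∀ k, (a ∈ Ei E k ↔ a.1 = k) := by
    intro a haF k
    simp [Ei, mem_filter, hF haF]
  have hcap : ∀ k, vsum x' (Ei E k) = vsum x (Ei E k) := by
    intro k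
    rw [hvs]
    have h1 : (e ∈ Ei E k) ↔ (e' ∈ Ei E k) := by
      rw [hEi e heF k, hEi e' he'F k, h1e]
    by_cases hmem : e ∈ Ei E k
    · rw [if_pos hmem, if_pos (h1.1 hmem)]; ring
    · rw [if_neg hmem, if_neg (fun h => hmem (h1.2 h))]; ring
  have hx'K : x' ∈ K E fj w d F := by
    have hsupp : ∀ a ∉ F, x' a = 0 := by
      intro a haF
      have h1 : a ≠ e := fun h => haF (h ▸ heF)
      have h2 : a ≠ e' := fun h => haF (h ▸ he'F)
      simp [hx'def, h1, h2, hxK.2 a haF]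
    refine ⟨mk_memPwd E fj w d hfj hw hF ?_ hsupp ?_ ?_, hsupp⟩
    · intro a
      rcases eq_or_ne a e with rfl | h1
      · have : (a = e') = False := by simp [hne]
        simp [hx'def, this]
        have := hxK.1.1 a
        linarith
      · rcases eq_or_ne a e' with rfl | h2
        · simp [hx'def, h1]
          linarith
        · simp [hx'def, h1, h2]
          exact hxK.1.1 a
    · intro G hGF
      rw [hvs]
      by_cases heG : e ∈ G
      · have := hδ₁ G hGF heG
        split_ifs <;> linarith
      · have := hle G hGF
        split_ifs <;> linarith
    · intro k
      rw [hcap k]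
      exact hxK.1.2.2.2 k
  have htight : ∀ G, TightS E F fj w x' G ↔ TightS E F fj w x G ∧ e' ∉ G := by
    intro G
    constructor
    · rintro ⟨hGF, heq⟩
      rw [hvs] at heq
      by_cases heG : e ∈ G
      · exfalso
        have h1 := hle G hGF
        have h2 : vsum x G ≠ fw E fj w G := fun h => hns ⟨G, ⟨hGF, h⟩, heG⟩
        have h3 := hδ₁ G hGF heG
        split_ifs at heq <;> [skip; skip] <;> first
          | (exact h2 (by linarith))
          | linarith
      · by_cases he'G : e' ∈ G
        · exfalso
          have h1 := hle G hGF
          simp only [if_pos he'G, if_neg heG] at heq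
          linarith
        · simp only [if_neg heG, if_neg he'G] at heq
          exact ⟨⟨hGF, by linarith⟩, he'G⟩
    · rintro ⟨⟨hGF, heq⟩, he'G⟩
      have heG : e ∉ G := fun h => hns ⟨G, ⟨hGF, heq⟩, h⟩
      refine ⟨hGF, ?_⟩
      rw [hvs]
      simp [heG, he'G, heq]
  have hposd : ∀ a, a ≠ e → 0 < x a → 0 < x' a := by
    intro a h1 h2
    rcases eq_or_ne a e' with rfl | h3
    · simp [hx'def, h1]; linarith
    · simp [hx'def, h1, h3]; exact h2
  have hvF : vsum x' F = vsum x F := by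
    rw [hvs]; simp [heF, he'F]
  exact ⟨x', hx'K, hvF, htight, hposd, hcap⟩

include hfj hw hd hF in
/-- transfer of reachability through a swap. -/
lemma transfer {x x' : B × S → ℝ} {e e' : B × S}
    (hnse : ¬ satS E F fj w x e)
    (hcap : ∀ k, vsum x' (Ei E k) = vsum x (Ei E k))
    (htight : ∀ G, TightS E F fj w x' G ↔ TightS E F fj w x G ∧ e' ∉ G)
    (hpos : ∀ a, a ≠ e → 0 < x a → 0 < x' a) :
    ∀ j i'', reachJ E F fj w d x j i'' →
      (∃ i₃ j' e2, j' ≤ j ∧ reachJ E F fj w d x' j' i₃ ∧ e2 ∈ F ∧ e2.1 = i₃ ∧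
        ¬ satS E F fj w x' e2) ∨ reachJ E F fj w d x' j i'' := by
  intro j
  induction j with
  | zero =>
    intro i'' h
    right
    simp only [reachJ] at h ⊢
    rw [hcap]
    exact h
  | succ j IH =>
    rintro i'' ⟨i₄, e3, e4, h4, he3F, he31, hsate3, hpose4, he41, hmine3⟩
    rcases IH i₄ h4 with ⟨i₃, j', e2, hj', hr', he2F, he21, hnsat⟩ | hr
    · exact Or.inl ⟨i₃, j', e2, hj'.trans (Nat.le_succ j), hr', he2F, he21, hnsat⟩
    · by_cases hse3 : satS E F fj w x' e3
      · refine Or.inr ⟨i₄, e3, e4, hr, he3F, he31, hse3, ?_, he41, ?_⟩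
        · have he3s : satS E F fj w x e4 := by
            obtain ⟨G0, hG0, hm0⟩ := hsate3
            exact ⟨G0, hG0, hmine3 G0 hG0 hm0⟩
          have hne3 : e4 ≠ e := fun h => hnse (h ▸ he3s)
          exact hpos _ hne3 hpose4
        · intro G hG hmem
          exact hmine3 G ((htight G).1 hG).1 hmem
      · exact Or.inl ⟨i₄, j, e3, Nat.le_succ j, hr, he3F, he31, hse3⟩

include hfj hw hd hF in
/-- KEY LEMMA: at a maximizer, every edge of a reachable buyer is saturated. -/
lemma main_sat : ∀ m : ℕ, ∀ x ∈ K E fj w d F, (∀ y ∈ K E fj w d F, vsum y F ≤ vsum x F) →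
    ∀ i, reachJ E F fj w d x m i → ∀ e, e ∈ F → e.1 = i → satS E F fj w x e := by
  intro m
  induction m using Nat.strong_induction_on with
  | _ m IH =>
    intro x hxK hmax i hreach e heF hei
    by_contra hns
    have hle : ∀ G ⊆ F, vsum x G ≤ fw E fj w G := fun G hG =>
      vsum_le_fw E fj w d hfj hw hxK.1 (hG.trans hF)
    match m, hreach, IH with
    | 0, hreach, IH =>
      -- direct augmentation
      simp only [reachJ] at hreach
      obtain ⟨δ₁, hδ₁pos, hδ₁⟩ := slack_pos E F fj w hfj hw hF hle heF hns
      set δ : ℝ := min δ₁ (d i - vsum x (Ei E i)) with hδdef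
      have hδpos : 0 < δ := lt_min hδ₁pos (by linarith)
      set y : B × S → ℝ := fun a => x a + if a = e then δ else 0 with hydef
      have hvs : ∀ G, vsum y G = vsum x G + if e ∈ G then δ else 0 := vsum_single x e δ
      have hyK : y ∈ K E fj w d F := by
        have hsupp : ∀ a ∉ F, y a = 0 := by
          intro a haF
          have h1 : a ≠ e := fun h => haF (h ▸ heF)
          simp [hydef, h1, hxK.2 a haF]
        refine ⟨mk_memPwd E fj w d hfj hw hF ?_ hsupp ?_ ?_, hsupp⟩
        · intro a
          have := hxK.1.1 a
          simp only [hydef]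
          split_ifs <;> linarith
        · intro G hGF
          rw [hvs]
          by_cases heG : e ∈ G
          · have h1 := hδ₁ G hGF heG
            have h2 : δ ≤ δ₁ := min_le_left _ _
            simp only [if_pos heG]
            linarith
          · simp only [if_neg heG, add_zero]
            exact hle G hGF
        · intro k
          rw [hvs]
          by_cases hk : e ∈ Ei E k
          · have : k = i := by
              have := (mem_filter.1 hk).2
              rw [hei] at this
              exact this.symm
            subst this
            have h2 : δ ≤ d k - vsum x (Ei E k) := min_le_right _ _
            simp only [if_pos hk]
            linarith
          · simp only [if_neg hk, add_zero]
            exact hxK.1.2.2.2 k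
      have h1 : vsum y F = vsum x F + δ := by rw [hvs, if_pos heF]
      have := hmax y hyK
      rw [h1] at this
      linarith
    | (k+1), hreach, IH =>
      obtain ⟨i', em, e'm, hrk, hemF, hemi', hsatem, hpose'm, he'm1, hmin⟩ := hreach
      obtain ⟨G0, hG0t, hemG0⟩ := hsatem
      have he'mG0 : e'm ∈ G0 := hmin G0 hG0t hemG0
      have he'mF : e'm ∈ F := hG0t.1 he'mG0
      have hsate' : satS E F fj w x e'm := ⟨G0, hG0t, he'mG0⟩
      have hnee : e ≠ e'm := fun h => hns (h ▸ hsate')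
      have h1e : e'm.1 = e.1 := by rw [he'm1, hei]
      obtain ⟨x', hx'K, hvF, htight, hposd, hcap⟩ :=
        swap_lemma E F fj w d hfj hw hd hF hxK heF he'mF hnee h1e hns hpose'm
      have hmax' : ∀ y ∈ K E fj w d F, vsum y F ≤ vsum x' F := by
        rw [hvF]; exact hmax
      have hsatem' : satS E F fj w x em := ⟨G0, hG0t, hemG0⟩
      rcases transfer E F fj w d hfj hw hd hF hns hcap htight hposd k i' hrk with
        ⟨i₃, j', e2, hj', hr', he2F, he21, hnsat⟩ | hr
      · exact hnsat (IH j' (Nat.lt_succ_of_le hj') x' hx'K hmax' i₃ hr' e2 he2F he21)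
      · have hnsatem : ¬ satS E F fj w x' em := by
          rintro ⟨G, hG, hm⟩
          have h2 := (htight G).1 hG
          exact h2.2 (hmin G h2.1 hm)
        exact hnsatem (IH k (Nat.lt_succ_self k) x' hx'K hmax' i' hr em hemF hemi')

end Part6


/-- `f_{w,d}(F) = min_{X ⊆ N_F} (f_w(E_X ∩ F) + d(N_F \ X))`. -/
theorem fwd_min_formula
    (E : Finset (B × S)) (fj : S → Finset (B × S) → ℝ)
    (hfj : ∀ j : S, IsMonoSubmodular (Ej E j) (fj j))
    (w : B × S → ℝ) (hw : memP E fj w)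
    (d : B → ℝ) (hd : ∀ i : B, 0 ≤ d i)
    (F : Finset (B × S)) (hF : F ⊆ E) :
    fwd E fj w d F =
      (NF F).powerset.inf' ⟨∅, Finset.empty_mem_powerset _⟩
        (fun X => fw E fj w (EX E X ∩ F) + ∑ k ∈ NF F \ X, d k) := by
  classical
  obtain ⟨x, hxK, hmax⟩ := exists_max E fj w d hfj hw hd F hF
  have h0K : (0 : B × S → ℝ) ∈ K E fj w d F := K_zero_mem E fj w d hw hd F
  set SS : Set ℝ := {r | ∃ x : B × S → ℝ, memPwd E fj w d x ∧ r = vsum x F} with hSS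
  have hSSne : SS.Nonempty := ⟨vsum 0 F, 0, h0K.1, rfl⟩
  have hub : ∀ X ⊆ NF F, ∀ r ∈ SS, r ≤ fw E fj w (EX E X ∩ F) + ∑ k ∈ NF F \ X, d k := by
    rintro X hX r ⟨x0, hx0, rfl⟩
    exact feas_le_cut E fj w d hfj hw hF hx0 hX
  have hbdd : BddAbove SS :=
    ⟨fw E fj w (EX E ∅ ∩ F) + ∑ k ∈ NF F \ ∅, d k,
      fun r hr => hub ∅ (empty_subset _) r hr⟩
  refine le_antisymm ?_ ?_
  · refine csSup_le hSSne fun r hr => ?_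
    refine Finset.le_inf' _ _ fun X hX => ?_
    exact hub X (mem_powerset.1 hX) r hr
  · -- hard direction
    set Xr : Finset B := (NF F).filter (fun i => ∃ m, reachJ E F fj w d x m i) with hXr
    have hXsub : Xr ⊆ NF F := filter_subset _ _
    set EXF : Finset (B × S) := EX E Xr ∩ F with hEXF
    have hEXF_F : EXF ⊆ F := inter_subset_right
    have hle : ∀ G ⊆ F, vsum x G ≤ fw E fj w G := fun G hG =>
      vsum_le_fw E fj w d hfj hw hxK.1 (hG.trans hF)
    have hsupp : ∀ e ∉ F, x e = 0 := hxK.2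
    -- all edges of reachable buyers are saturated
    have hsat_all : ∀ e ∈ EXF, satS E F fj w x e := by
      intro e he
      rw [hEXF, mem_inter, hXr] at he
      obtain ⟨m, hm⟩ := (mem_filter.1 (mem_filter.1 he.1).2).2
      exact main_sat E F fj w d hfj hw hd hF m x hxK hmax e.1 hm e he.2 rfl
    have hTp := fun e (he : e ∈ EXF) =>
      Tpick_spec E F fj w hfj hw hF hle (hsat_all e he)
    set A : Finset (B × S) := EXF.biUnion (fun e => Tpick E F fj w x e) with hA
    have hA_tight : TightS E F fj w x A :=
      tight_biUnion E F fj w hfj hw hF hle EXF _ (fun e he => (hTp e he).1.1)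
    have hsubA : EXF ⊆ A := fun e he => mem_biUnion.2 ⟨e, he, (hTp e he).1.2⟩
    have hAF : A ⊆ F := hA_tight.1
    -- no mass outside EXF inside A
    have h0 : vsum x (A \ EXF) = 0 := by
      refine Finset.sum_eq_zero fun a ha => ?_
      rw [mem_sdiff] at ha
      by_contra hxa
      have hapos : 0 < x a := lt_of_le_of_ne (hxK.1.1 a) (Ne.symm hxa)
      obtain ⟨e0, he0, hae0⟩ := mem_biUnion.1 ha.1
      have he0' := he0
      rw [hEXF, mem_inter] at he0'
      obtain ⟨m0, hm0⟩ := (mem_filter.1 (mem_filter.1 he0'.1).2).2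
      have he0F : e0 ∈ F := he0'.2
      have hreach : reachJ E F fj w d x (m0 + 1) a.1 := by
        refine ⟨e0.1, e0, a, hm0, he0F, rfl, hsat_all e0 he0, hapos, rfl, ?_⟩
        intro G hG hmem
        exact (hTp e0 he0).2 G hG hmem hae0
      have haF : a ∈ F := hAF ha.1
      have haNF : a.1 ∈ NF F := mem_image_of_mem Prod.fst haF
      have haXr : a.1 ∈ Xr := by
        rw [hXr, mem_filter]
        exact ⟨haNF, m0 + 1, hreach⟩
      exact ha.2 (mem_inter.2 ⟨mem_filter.2 ⟨hF haF, haXr⟩, haF⟩)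
    -- fw EXF ≤ x(EXF)
    have hkey : fw E fj w EXF ≤ vsum x EXF := by
      have h1 : fw E fj w EXF ≤ fw E fj w A :=
        fw_mono E fj w hfj hw hsubA (hAF.trans hF)
      have h2 : fw E fj w A = vsum x A := hA_tight.2.symm
      have h3 : vsum x (A \ EXF) + vsum x EXF = vsum x A := vsum_sdiff hsubA x
      rw [h0] at h3
      linarith
    -- buyer decomposition of vsum x F
    have hfib : ∑ i ∈ NF F, vsum x (F.filter fun e => e.1 = i) = vsum x F :=
      vsum_buyer_fiber (fun e he => mem_image_of_mem Prod.fst he) x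
    have hsplit : ∑ i ∈ NF F \ Xr, vsum x (F.filter fun e => e.1 = i)
        + ∑ i ∈ Xr, vsum x (F.filter fun e => e.1 = i)
        = ∑ i ∈ NF F, vsum x (F.filter fun e => e.1 = i) :=
      Finset.sum_sdiff hXsub
    -- on Xr the fibers sum to vsum x EXF
    have hXsum : ∑ i ∈ Xr, vsum x (F.filter fun e => e.1 = i) = vsum x EXF := by
      have hEXF' : EXF = F.filter (fun e => e.1 ∈ Xr) := by
        rw [hEXF]
        ext e
        simp only [mem_inter, mem_filter, EX]
        exact ⟨fun h => ⟨h.2, h.1.2⟩, fun h => ⟨⟨hF h.1, h.2⟩, h.1⟩⟩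
      rw [hEXF']
      rw [← vsum_buyer_fiber (Y := Xr)
        (fun e he => (mem_filter.1 he).2) x]
      refine Finset.sum_congr rfl fun i hi => ?_
      congr 1
      rw [Finset.filter_filter]
      refine Finset.filter_congr fun e heF => ?_
      constructor
      · intro h; exact ⟨by rw [h]; exact hi, h⟩
      · intro h; exact h.2
    -- outside Xr the buyers are capped tight
    have hdsum : ∀ i ∈ NF F \ Xr, vsum x (F.filter fun e => e.1 = i) = d i := by
      intro i hi
      rw [mem_sdiff] at hi
      have hnr : ¬ ∃ m, reachJ E F fj w d x m i := by
        intro hm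
        exact hi.2 (by rw [hXr]; exact mem_filter.2 ⟨hi.1, hm⟩)
      have h1 : ¬ vsum x (Ei E i) < d i := fun h => hnr ⟨0, h⟩
      have h2 : vsum x (Ei E i) ≤ d i := hxK.1.2.2.2 i
      have h3 : vsum x (Ei E i) = d i := le_antisymm h2 (not_lt.1 h1)
      have h4 : Ei E i ∩ F = F.filter (fun e => e.1 = i) := by
        ext e
        simp only [mem_inter, mem_filter, Ei]
        exact ⟨fun h => ⟨h.2, h.1.2⟩, fun h => ⟨⟨hF h.1, h.2⟩, h.1⟩⟩
      rw [← h4, ← vsum_supp hsupp (Ei E i), h3]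
    have hfinal : fw E fj w EXF + ∑ k ∈ NF F \ Xr, d k ≤ vsum x F := by
      have h5 : ∑ i ∈ NF F \ Xr, vsum x (F.filter fun e => e.1 = i)
          = ∑ k ∈ NF F \ Xr, d k := Finset.sum_congr rfl hdsum
      rw [← hfib, ← hsplit, h5, hXsum]
      linarith
    have hmem : vsum x F ∈ SS := ⟨x, hxK.1, rfl⟩
    have h6 : vsum x F ≤ sSup SS := le_csSup hbdd hmem
    refine le_trans ?_ h6
    refine le_trans (Finset.inf'_le _ (mem_powerset.2 hXsub)) ?_
    exact hfinal


end TwoSidedMarket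
end
end

section
/- Let i ∈ N be a buyer and ξ ∈ ℝ_{≥0}^{E_i}, and define h^i_ξ : 2^{N−i} → ℝ by h^i_ξ(Y) := min_{F ⊆ E_i} ( f_{w,d}(E_Y ∪ F) − ξ(F) ). Then P^i_{w,d}(ξ) is nonempty if and only if h^i_ξ(Y) ≥ 0 for every Y ⊆ N−i; and in this case h^i_ξ is monotone submodular on N−i and P^i_{w,d}(ξ) coincides with the polymatroid associated with h^i_ξ, i.e., P^i_{w,d}(ξ) = {u ∈ ℝ_{≥0}^{N−i} : u(Y) ≤ h^i_ξ(Y) for all Y ⊆ N−i}. -/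
open Finset

noncomputable section

namespace TwoSidedMarket

variable {B S : Type*} [Fintype B] [Fintype S] [DecidableEq B] [DecidableEq S]

section Generic


variable {α : Type*} [DecidableEq α]

lemma greedy_exists (Gr : Finset α) (q : Finset α → ℝ)
    (hq : IsMonoSubmodularWeak Gr q) (h0 : q ∅ = 0) :
    ∀ A : Finset α, A ⊆ Gr → ∃ x : α → ℝ, (∀ a, 0 ≤ x a) ∧ (∀ a ∉ A, x a = 0) ∧
      (∀ F, F ⊆ Gr → ∑ a ∈ F, x a ≤ q F) ∧ ∑ a ∈ A, x a = q A := by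
  intro A
  induction A using Finset.induction_on with
  | empty =>
    intro _
    refine ⟨0, fun a => le_rfl, fun a _ => rfl, fun F hF => ?_, by simp [h0]⟩
    simpa using h0 ▸ hq.1 ∅ F (Finset.empty_subset F) hF
  | @insert e A0 he ih =>
    intro hsub
    have hA0G : A0 ⊆ Gr := (Finset.subset_insert e A0).trans hsub
    obtain ⟨x0, hx00, hx0s, hx0F, hx0A⟩ := ih hA0G
    have heF0 : e ∈ insert e A0 := Finset.mem_insert_self e A0
    set c := q (insert e A0) - q A0 with hc
    have hc0 : 0 ≤ c := by
      have := hq.1 A0 (insert e A0) (Finset.subset_insert e A0) hsub; simp [hc]; linarith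
    refine ⟨Function.update x0 e c, ?_, ?_, ?_, ?_⟩
    · intro a; by_cases h : a = e
      · subst h; simpa using hc0
      · rw [Function.update_of_ne h]; exact hx00 a
    · intro a ha
      have hne : a ≠ e := fun h => ha (h ▸ heF0)
      rw [Function.update_of_ne hne]
      exact hx0s a (fun h => ha (Finset.mem_insert_of_mem h))
    · intro F hF
      by_cases heF : e ∈ F
      · have h1 : ∑ a ∈ F, Function.update x0 e c a = c + ∑ a ∈ F.erase e, x0 a := by
          rw [← Finset.add_sum_erase F _ heF, Function.update_self]
          congr 1
          exact Finset.sum_congr rfl fun a ha =>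
            Function.update_of_ne (Finset.ne_of_mem_erase ha) _ _
        have h2 : ∑ a ∈ F ∩ A0, x0 a = ∑ a ∈ F.erase e, x0 a := by
          refine Finset.sum_subset ?_ ?_
          · intro a ha; rcases Finset.mem_inter.mp ha with ⟨h1', h2'⟩
            exact Finset.mem_erase.mpr ⟨fun h => he (h ▸ h2'), h1'⟩
          · intro a ha hna
            exact hx0s a fun hmem =>
              hna (Finset.mem_inter.mpr ⟨Finset.mem_of_mem_erase ha, hmem⟩)
        have h3 : ∑ a ∈ F ∩ A0, x0 a ≤ q (F ∩ A0) :=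
          hx0F _ ((Finset.inter_subset_left).trans hF)
        have h4 : q (F ∩ A0) + q (F ∪ A0) ≤ q F + q A0 := hq.2 F A0 hF hA0G
        have h5 : q (insert e A0) ≤ q (F ∪ A0) := by
          refine hq.1 _ _ ?_ (Finset.union_subset hF hA0G)
          intro a ha; rcases Finset.mem_insert.mp ha with h | h
          · exact Finset.mem_union_left _ (h ▸ heF)
          · exact Finset.mem_union_right _ h
        rw [h1, ← h2]; simp only [hc]; linarith
      · have heq : ∑ a ∈ F, Function.update x0 e c a = ∑ a ∈ F, x0 a :=
          Finset.sum_congr rfl fun a ha =>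
            Function.update_of_ne (fun h => heF (by rw [← h]; exact ha)) _ _
        rw [heq]; exact hx0F F hF
    · rw [Finset.sum_insert he, Function.update_self]
      have heq : ∑ a ∈ A0, Function.update x0 e c a = ∑ a ∈ A0, x0 a :=
        Finset.sum_congr rfl fun a ha =>
          Function.update_of_ne (fun h => he (by rw [← h]; exact ha)) _ _
      rw [heq, hx0A]; simp [hc]

def zfix (q : Finset α → ℝ) (F : Finset α) : ℝ := if F = ∅ then 0 else q F

lemma zfix_weak {Gr : Finset α} {q : Finset α → ℝ} (hq : IsMonoSubmodularWeak Gr q)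
    (h0 : 0 ≤ q ∅) : IsMonoSubmodularWeak Gr (zfix q) := by
  constructor
  · intro A C hAC hCG
    by_cases hA : A = ∅
    · subst hA
      by_cases hC : C = ∅
      · simp [zfix, hC]
      · simp only [zfix, if_pos rfl, if_neg hC]
        exact le_trans h0 (hq.1 ∅ C (Finset.empty_subset C) hCG)
    · have hC : C ≠ ∅ := fun h => hA (Finset.subset_empty.mp (h ▸ hAC))
      simp only [zfix, if_neg hA, if_neg hC]
      exact hq.1 A C hAC hCG
  · intro A C hAG hCG
    by_cases hA : A = ∅
    · subst hA; simp [zfix]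
    by_cases hC : C = ∅
    · subst hC; simp [Finset.inter_comm, Finset.union_comm, zfix]
    have hU : A ∪ C ≠ ∅ := fun h => hA (Finset.subset_empty.mp (h ▸ Finset.subset_union_left))
    by_cases hI : A ∩ C = ∅
    · simp only [zfix, if_pos hI, if_neg hA, if_neg hC, if_neg hU]
      have := hq.2 A C hAG hCG
      rw [hI] at this; linarith
    · simp only [zfix, if_neg hI, if_neg hA, if_neg hC, if_neg hU]
      exact hq.2 A C hAG hCG

lemma greedy_scaled (Gr : Finset α) (q : Finset α → ℝ)
    (hq : IsMonoSubmodularWeak Gr q) (h0 : 0 ≤ q ∅) (A : Finset α) (hA : A ⊆ Gr)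
    (c : ℝ) (hc0 : 0 ≤ c) (hcA : c ≤ q A) (hce : A = ∅ → c ≤ 0) :
    ∃ x : α → ℝ, (∀ a, 0 ≤ x a) ∧ (∀ a ∉ A, x a = 0) ∧
      (∀ F, F ⊆ Gr → ∑ a ∈ F, x a ≤ q F) ∧ ∑ a ∈ A, x a = c := by
  obtain ⟨x, hx0, hxs, hxF, hxA⟩ :=
    greedy_exists Gr (zfix q) (zfix_weak hq h0) (by simp [zfix]) A hA
  have hzA : c ≤ zfix q A := by
    by_cases h : A = ∅
    · simpa [zfix, h] using hce h
    · simpa [zfix, h] using hcA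
  have hz0 : 0 ≤ zfix q A := le_trans hc0 hzA
  have hsumnn : ∀ F : Finset α, 0 ≤ ∑ a ∈ F, x a := fun F =>
    Finset.sum_nonneg fun a _ => hx0 a
  by_cases hz : zfix q A = 0
  · refine ⟨0, fun a => le_rfl, fun a _ => rfl, fun F hF => ?_, ?_⟩
    · simp only [Pi.zero_apply, Finset.sum_const_zero]
      have : zfix q F ≤ q F := by
        by_cases h : F = ∅ <;> simp [zfix, h]
        exact h0
      have h2 : (0:ℝ) ≤ zfix q F := by
        have := (zfix_weak hq h0).1 ∅ F (Finset.empty_subset F) hF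
        simpa [zfix] using this
      linarith
    · simp; linarith [hzA, hc0, hz ▸ hzA]
  · set t := c / zfix q A with ht
    have hzpos : 0 < zfix q A := lt_of_le_of_ne hz0 (Ne.symm hz)
    have ht0 : 0 ≤ t := div_nonneg hc0 (le_of_lt hzpos)
    have ht1 : t ≤ 1 := (div_le_one hzpos).mpr hzA
    refine ⟨fun a => t * x a, fun a => mul_nonneg ht0 (hx0 a), fun a ha => by
      simp [hxs a ha], fun F hF => ?_, ?_⟩
    · rw [← Finset.mul_sum]
      have h1 : t * (∑ a ∈ F, x a) ≤ ∑ a ∈ F, x a := by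
        nlinarith [hsumnn F]
      have h2 : ∑ a ∈ F, x a ≤ zfix q F := hxF F hF
      have h3 : zfix q F ≤ q F := by
        by_cases h : F = ∅ <;> simp [zfix, h]
        exact h0
      linarith
    · rw [← Finset.mul_sum, hxA, ht, div_mul_cancel₀ _ hz]

end Generic

section Generic2

variable {α : Type*} [DecidableEq α]

def ctr (p : Finset α → ℝ) (A : Finset α) (ξ : α → ℝ) (F : Finset α) : ℝ :=
  A.powerset.inf' ⟨∅, Finset.empty_mem_powerset _⟩ fun F' => p (F ∪ F') - ∑ a ∈ F', ξ a

lemma ctr_le (p : Finset α → ℝ) (A : Finset α) (ξ : α → ℝ) (F : Finset α)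
    {F' : Finset α} (h : F' ⊆ A) : ctr p A ξ F ≤ p (F ∪ F') - ∑ a ∈ F', ξ a :=
  Finset.inf'_le _ (Finset.mem_powerset.mpr h)

lemma le_ctr (p : Finset α → ℝ) (A : Finset α) (ξ : α → ℝ) (F : Finset α) {c : ℝ}
    (h : ∀ F' ⊆ A, c ≤ p (F ∪ F') - ∑ a ∈ F', ξ a) : c ≤ ctr p A ξ F :=
  Finset.le_inf' _ _ fun F' hF' => h F' (Finset.mem_powerset.mp hF')

lemma ctr_empty {Gr : Finset α} {p : Finset α → ℝ} {A : Finset α} {ξ : α → ℝ}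
    (h0 : p ∅ = 0) (hfeas : ∀ F ⊆ A, ∑ a ∈ F, ξ a ≤ p F) :
    ctr p A ξ ∅ = 0 := by
  refine le_antisymm ?_ (le_ctr _ _ _ _ fun F' hF' => ?_)
  · have := ctr_le p A ξ ∅ (Finset.empty_subset A)
    simpa [h0] using this
  · have := hfeas F' hF'
    simp only [Finset.empty_union]
    linarith

lemma ctr_le_self (p : Finset α → ℝ) (A : Finset α) (ξ : α → ℝ) (F : Finset α)
    (hξ0 : ∀ a, 0 ≤ ξ a) : ctr p A ξ F ≤ p F := by
  have := ctr_le p A ξ F (Finset.empty_subset A)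
  simpa using this

lemma ctr_weak {Gr : Finset α} {p : Finset α → ℝ} (hq : IsMonoSubmodularWeak Gr p)
    {A : Finset α} (hA : A ⊆ Gr) (ξ : α → ℝ) :
    IsMonoSubmodularWeak (Gr \ A) (ctr p A ξ) := by
  constructor
  · intro X Y hXY hYG
    obtain ⟨FY, hFYm, hFYe⟩ := Finset.exists_mem_eq_inf' (⟨∅, Finset.empty_mem_powerset A⟩ :
      A.powerset.Nonempty) fun F' => p (Y ∪ F') - ∑ a ∈ F', ξ a
    have hFY : FY ⊆ A := Finset.mem_powerset.mp hFYm
    have hFYe' : ctr p A ξ Y = p (Y ∪ FY) - ∑ a ∈ FY, ξ a := hFYe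
    rw [hFYe']
    have h1 : ctr p A ξ X ≤ p (X ∪ FY) - ∑ a ∈ FY, ξ a := ctr_le _ _ _ _ hFY
    have h2 : p (X ∪ FY) ≤ p (Y ∪ FY) := by
      refine hq.1 _ _ (Finset.union_subset_union_left hXY) ?_
      exact Finset.union_subset ((hYG.trans (Finset.sdiff_subset))) (hFY.trans hA)
    linarith
  · intro X Y hXG hYG
    obtain ⟨FX, hFXm, hFXe⟩ := Finset.exists_mem_eq_inf' (⟨∅, Finset.empty_mem_powerset A⟩ :
      A.powerset.Nonempty) fun F' => p (X ∪ F') - ∑ a ∈ F', ξ a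
    obtain ⟨FY, hFYm, hFYe⟩ := Finset.exists_mem_eq_inf' (⟨∅, Finset.empty_mem_powerset A⟩ :
      A.powerset.Nonempty) fun F' => p (Y ∪ F') - ∑ a ∈ F', ξ a
    have hFX : FX ⊆ A := Finset.mem_powerset.mp hFXm
    have hFY : FY ⊆ A := Finset.mem_powerset.mp hFYm
    have hXA : ∀ e ∈ X, e ∉ A := fun e he hA' => (Finset.mem_sdiff.mp (hXG he)).2 hA'
    have hYA : ∀ e ∈ Y, e ∉ A := fun e he hA' => (Finset.mem_sdiff.mp (hYG he)).2 hA'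
    have hint : (X ∪ FX) ∩ (Y ∪ FY) = (X ∩ Y) ∪ (FX ∩ FY) := by
      ext e
      simp only [Finset.mem_inter, Finset.mem_union]
      constructor
      · rintro ⟨hx | hx, hy | hy⟩
        · exact Or.inl ⟨hx, hy⟩
        · exact absurd (hFY hy) (hXA e hx)
        · exact absurd (hFX hx) (hYA e hy)
        · exact Or.inr ⟨hx, hy⟩
      · rintro (⟨h1, h2⟩ | ⟨h1, h2⟩)
        · exact ⟨Or.inl h1, Or.inl h2⟩
        · exact ⟨Or.inr h1, Or.inr h2⟩
    have huni : (X ∪ FX) ∪ (Y ∪ FY) = (X ∪ Y) ∪ (FX ∪ FY) := by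
      ext e; simp only [Finset.mem_union]; tauto
    have hsub : p ((X ∪ FX) ∩ (Y ∪ FY)) + p ((X ∪ FX) ∪ (Y ∪ FY)) ≤ p (X ∪ FX) + p (Y ∪ FY) :=
      hq.2 _ _ (Finset.union_subset (hXG.trans Finset.sdiff_subset) (hFX.trans hA))
        (Finset.union_subset (hYG.trans Finset.sdiff_subset) (hFY.trans hA))
    have hI : ctr p A ξ (X ∩ Y) ≤ p ((X ∩ Y) ∪ (FX ∩ FY)) - ∑ a ∈ FX ∩ FY, ξ a :=
      ctr_le _ _ _ _ ((Finset.inter_subset_left).trans hFX)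
    have hU : ctr p A ξ (X ∪ Y) ≤ p ((X ∪ Y) ∪ (FX ∪ FY)) - ∑ a ∈ FX ∪ FY, ξ a :=
      ctr_le _ _ _ _ (Finset.union_subset hFX hFY)
    have hsum : ∑ a ∈ FX ∪ FY, ξ a + ∑ a ∈ FX ∩ FY, ξ a = ∑ a ∈ FX, ξ a + ∑ a ∈ FY, ξ a :=
      Finset.sum_union_inter
    rw [hint, huni] at hsub
    have hFXe' : ctr p A ξ X = p (X ∪ FX) - ∑ a ∈ FX, ξ a := hFXe
    have hFYe' : ctr p A ξ Y = p (Y ∪ FY) - ∑ a ∈ FY, ξ a := hFYe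
    rw [hFXe', hFYe']
    linarith

lemma ctr_recover {Gr : Finset α} {p : Finset α → ℝ} {A : Finset α} {ξ : α → ℝ}
    (hA : A ⊆ Gr) (y : α → ℝ)
    (hys : ∀ a ∉ Gr \ A, y a = 0) (hξs : ∀ a ∉ A, ξ a = 0)
    (hy : ∀ F ⊆ Gr \ A, ∑ a ∈ F, y a ≤ ctr p A ξ F) :
    ∀ H ⊆ Gr, ∑ a ∈ H, (y a + ξ a) ≤ p H := by
  intro H hH
  rw [Finset.sum_add_distrib]
  have h1 : ∑ a ∈ H, y a = ∑ a ∈ H \ A, y a := by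
    refine (Finset.sum_subset (Finset.sdiff_subset) fun a ha hna => ?_).symm
    refine hys a fun hmem => hna ?_
    exact Finset.mem_sdiff.mpr ⟨ha, (Finset.mem_sdiff.mp hmem).2⟩
  have h2 : ∑ a ∈ H, ξ a = ∑ a ∈ H ∩ A, ξ a := by
    refine (Finset.sum_subset (Finset.inter_subset_left) fun a ha hna => ?_).symm
    exact hξs a fun hmem => hna (Finset.mem_inter.mpr ⟨ha, hmem⟩)
  have h3 : ∑ a ∈ H \ A, y a ≤ ctr p A ξ (H \ A) := by
    refine hy _ ?_
    intro a ha; rcases Finset.mem_sdiff.mp ha with ⟨h1', h2'⟩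
    exact Finset.mem_sdiff.mpr ⟨hH h1', h2'⟩
  have h4 : ctr p A ξ (H \ A) ≤ p ((H \ A) ∪ (H ∩ A)) - ∑ a ∈ H ∩ A, ξ a :=
    ctr_le _ _ _ _ (Finset.inter_subset_right)
  rw [Finset.sdiff_union_inter] at h4
  linarith

end Generic2


section Market

variable {B S : Type*} [Fintype B] [Fintype S] [DecidableEq B] [DecidableEq S]
variable (E : Finset (B × S)) (fj : S → Finset (B × S) → ℝ) (w : B × S → ℝ) (d : B → ℝ)

def rj (j : S) (F : Finset (B × S)) : ℝ :=
  ((Ej E j).powerset.filter fun F' => F ∩ Ej E j ⊆ F').inf'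
    ⟨Ej E j, Finset.mem_filter.mpr ⟨Finset.mem_powerset.mpr le_rfl, Finset.inter_subset_right⟩⟩
    fun F' => fj j F' - vsum w F'

def rr (F : Finset (B × S)) : ℝ := ∑ j : S, rj E fj w j F

variable {E fj w d}

lemma rj_le {j : S} {F F' : Finset (B × S)} (h1 : F' ⊆ Ej E j) (h2 : F ∩ Ej E j ⊆ F') :
    rj E fj w j F ≤ fj j F' - vsum w F' :=
  Finset.inf'_le _ (Finset.mem_filter.mpr ⟨Finset.mem_powerset.mpr h1, h2⟩)

lemma le_rj {j : S} {F : Finset (B × S)} {c : ℝ}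
    (h : ∀ F', F' ⊆ Ej E j → F ∩ Ej E j ⊆ F' → c ≤ fj j F' - vsum w F') :
    c ≤ rj E fj w j F :=
  Finset.le_inf' _ _ fun F' hF' => by
    rcases Finset.mem_filter.mp hF' with ⟨h1, h2⟩
    exact h F' (Finset.mem_powerset.mp h1) h2

lemma exists_rj_min (j : S) (F : Finset (B × S)) :
    ∃ F', F' ⊆ Ej E j ∧ F ∩ Ej E j ⊆ F' ∧ rj E fj w j F = fj j F' - vsum w F' := by
  obtain ⟨F', hm, he⟩ := Finset.exists_mem_eq_inf'
    (⟨Ej E j, Finset.mem_filter.mpr ⟨Finset.mem_powerset.mpr le_rfl,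
      Finset.inter_subset_right⟩⟩ :
      ((Ej E j).powerset.filter fun F' => F ∩ Ej E j ⊆ F').Nonempty)
    fun F' => fj j F' - vsum w F'
  rcases Finset.mem_filter.mp hm with ⟨h1, h2⟩
  exact ⟨F', Finset.mem_powerset.mp h1, h2, he⟩

lemma rj_mono {j : S} {F F2 : Finset (B × S)} (h : F ⊆ F2) :
    rj E fj w j F ≤ rj E fj w j F2 := by
  obtain ⟨F', h1, h2, he⟩ := exists_rj_min (fj := fj) (w := w) j F2
  rw [he]
  exact rj_le h1 ((Finset.inter_subset_inter_right h).trans h2)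

lemma rj_submod (hfj : ∀ j : S, IsMonoSubmodular (Ej E j) (fj j)) {j : S}
    (F G : Finset (B × S)) :
    rj E fj w j (F ∩ G) + rj E fj w j (F ∪ G) ≤ rj E fj w j F + rj E fj w j G := by
  obtain ⟨FA, hA1, hA2, heA⟩ := exists_rj_min (fj := fj) (w := w) j F
  obtain ⟨FB, hB1, hB2, heB⟩ := exists_rj_min (fj := fj) (w := w) j G
  rw [heA, heB]
  have hI : rj E fj w j (F ∩ G) ≤ fj j (FA ∩ FB) - vsum w (FA ∩ FB) := by
    refine rj_le ((Finset.inter_subset_left).trans hA1) ?_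
    intro e he
    rcases Finset.mem_inter.mp he with ⟨hfg, hej⟩
    rcases Finset.mem_inter.mp hfg with ⟨hf, hg⟩
    exact Finset.mem_inter.mpr ⟨hA2 (Finset.mem_inter.mpr ⟨hf, hej⟩),
      hB2 (Finset.mem_inter.mpr ⟨hg, hej⟩)⟩
  have hU : rj E fj w j (F ∪ G) ≤ fj j (FA ∪ FB) - vsum w (FA ∪ FB) := by
    refine rj_le (Finset.union_subset hA1 hB1) ?_
    intro e he
    rcases Finset.mem_inter.mp he with ⟨hfg, hej⟩
    rcases Finset.mem_union.mp hfg with hf | hg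
    · exact Finset.mem_union_left _ (hA2 (Finset.mem_inter.mpr ⟨hf, hej⟩))
    · exact Finset.mem_union_right _ (hB2 (Finset.mem_inter.mpr ⟨hg, hej⟩))
  have hsubm : fj j (FA ∩ FB) + fj j (FA ∪ FB) ≤ fj j FA + fj j FB :=
    (hfj j).2.2 FA FB hA1 hB1
  have hw' : vsum w (FA ∪ FB) + vsum w (FA ∩ FB) = vsum w FA + vsum w FB :=
    Finset.sum_union_inter
  simp only [vsum] at *
  linarith

lemma rj_empty (hfj : ∀ j : S, IsMonoSubmodular (Ej E j) (fj j)) (hw : memP E fj w) (j : S) :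
    rj E fj w j ∅ = 0 := by
  refine le_antisymm ?_ (le_rj fun F' h1 _ => ?_)
  · have := rj_le (E := E) (fj := fj) (w := w) (j := j) (F := ∅)
      (Finset.empty_subset (Ej E j)) (by simp)
    simpa [(hfj j).1, vsum] using this
  · have := hw.2.2 j F' h1
    linarith

lemma rr_empty (hfj : ∀ j : S, IsMonoSubmodular (Ej E j) (fj j)) (hw : memP E fj w) :
    rr E fj w ∅ = 0 := by
  simp [rr, rj_empty hfj hw]

lemma rr_weak (hfj : ∀ j : S, IsMonoSubmodular (Ej E j) (fj j)) (G : Finset (B × S)) :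
    IsMonoSubmodularWeak G (rr E fj w) := by
  constructor
  · intro A C hAC _
    exact Finset.sum_le_sum fun j _ => rj_mono hAC
  · intro A C _ _
    rw [rr, rr, rr, rr, ← Finset.sum_add_distrib, ← Finset.sum_add_distrib]
    exact Finset.sum_le_sum fun j _ => rj_submod hfj A C

lemma vsum_seller_split {x : B × S → ℝ} (hxs : ∀ e ∉ E, x e = 0) (F : Finset (B × S)) :
    vsum x F = ∑ j : S, vsum x (F ∩ Ej E j) := by
  have h1 : vsum x F = vsum x (F ∩ E) := by
    refine (Finset.sum_subset (Finset.inter_subset_left) fun e he hne => ?_).symm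
    exact hxs e fun hmem => hne (Finset.mem_inter.mpr ⟨he, hmem⟩)
  have h2 : ∀ j : S, F ∩ Ej E j = (F ∩ E).filter fun e => e.2 = j := by
    intro j; ext e
    simp only [Ej, Finset.mem_inter, Finset.mem_filter]
    tauto
  rw [h1]
  rw [show (∑ j : S, vsum x (F ∩ Ej E j)) =
    ∑ j : S, ∑ e ∈ (F ∩ E).filter fun e => e.2 = j, x e from
    Finset.sum_congr rfl fun j _ => by rw [vsum, h2 j]]
  exact (Finset.sum_fiberwise (F ∩ E) (fun e => e.2) x).symm

lemma EX_biUnion (W : Finset B) : EX E W = W.biUnion fun m => Ei E m := by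
  ext e
  simp only [EX, Ei, Finset.mem_filter, Finset.mem_biUnion]
  constructor
  · rintro ⟨he, hw'⟩; exact ⟨e.1, hw', he, rfl⟩
  · rintro ⟨m, hm, he, hem⟩; exact ⟨he, hem ▸ hm⟩

lemma vsum_buyer_split (x : B × S → ℝ) (W : Finset B) :
    vsum x (EX E W) = ∑ m ∈ W, vsum x (Ei E m) := by
  rw [EX_biUnion, vsum]
  refine Finset.sum_biUnion ?_
  intro m1 _ m2 _ hne
  refine Finset.disjoint_left.mpr fun e he1 he2 => hne ?_
  rw [← (Finset.mem_filter.mp he1).2, ← (Finset.mem_filter.mp he2).2]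

lemma EX_empty : EX E (∅ : Finset B) = ∅ := by
  ext e; simp [EX]

lemma EX_inter (W1 W2 : Finset B) : EX E (W1 ∩ W2) = EX E W1 ∩ EX E W2 := by
  ext e; simp only [EX, Finset.mem_filter, Finset.mem_inter]; tauto

lemma EX_union (W1 W2 : Finset B) : EX E (W1 ∪ W2) = EX E W1 ∪ EX E W2 := by
  ext e; simp only [EX, Finset.mem_filter, Finset.mem_union]; tauto

lemma EX_insert (k : B) (W : Finset B) : EX E (insert k W) = Ei E k ∪ EX E W := by
  ext e; simp only [EX, Ei, Finset.mem_filter, Finset.mem_union, Finset.mem_insert]; tauto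

lemma EX_singleton (k : B) : EX E ({k} : Finset B) = Ei E k := by
  ext e; simp [EX, Ei]

lemma EX_mono {W1 W2 : Finset B} (h : W1 ⊆ W2) : EX E W1 ⊆ EX E W2 := by
  intro e he
  rcases Finset.mem_filter.mp he with ⟨h1, h2⟩
  exact Finset.mem_filter.mpr ⟨h1, h h2⟩

lemma EX_subset_of_classes {W : Finset B} {G : Finset (B × S)}
    (h : ∀ k ∈ W, Ei E k ⊆ G) : EX E W ⊆ G := by
  intro e he
  rcases Finset.mem_filter.mp he with ⟨h1, h2⟩
  exact h e.1 h2 (Finset.mem_filter.mpr ⟨h1, rfl⟩)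

end Market


section LemC

variable {B S : Type*} [Fintype B] [Fintype S] [DecidableEq B] [DecidableEq S]

lemma lemC (E : Finset (B × S)) (u : B → ℝ) :
    ∀ (K : Finset B) (G : Finset (B × S)) (p : Finset (B × S) → ℝ),
      (∀ k ∈ K, Ei E k ⊆ G) → IsMonoSubmodularWeak G p → p ∅ = 0 →
      (∀ k ∈ K, 0 ≤ u k) →
      (∀ Z ⊆ K, ∑ k ∈ Z, u k ≤ p (EX E Z)) →
      ∃ x : B × S → ℝ, (∀ e, 0 ≤ x e) ∧ (∀ e ∉ G, x e = 0) ∧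
        (∀ F ⊆ G, vsum x F ≤ p F) ∧ ∀ k ∈ K, vsum x (Ei E k) = u k := by
  intro K
  induction K using Finset.induction_on with
  | empty =>
    intro G p _ hpw hp0 _ _
    refine ⟨0, fun e => le_rfl, fun e _ => rfl, fun F hF => ?_, fun k hk => absurd hk (by simp)⟩
    have : p ∅ ≤ p F := hpw.1 ∅ F (Finset.empty_subset F) hF
    simpa [vsum, hp0] using this
  | @insert k K0 hk ih =>
    intro G p hcls hpw hp0 hu hyp
    have hkK : k ∈ insert k K0 := Finset.mem_insert_self k K0
    set A := Ei E k with hA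
    have hAG : A ⊆ G := hcls k hkK
    set G₁ : Finset (B × S) → ℝ := fun F =>
      K0.powerset.inf' ⟨∅, Finset.empty_mem_powerset _⟩
        fun Z => p (EX E Z ∪ F) - ∑ m ∈ Z, u m with hG₁
    have hG₁le : ∀ (F : Finset (B × S)) (Z : Finset B), Z ⊆ K0 →
        G₁ F ≤ p (EX E Z ∪ F) - ∑ m ∈ Z, u m := fun F Z hZ =>
      Finset.inf'_le _ (Finset.mem_powerset.mpr hZ)
    have hle_G₁ : ∀ (F : Finset (B × S)) (c : ℝ),
        (∀ Z ⊆ K0, c ≤ p (EX E Z ∪ F) - ∑ m ∈ Z, u m) → c ≤ G₁ F := fun F c h =>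
      Finset.le_inf' _ _ fun Z hZ => h Z (Finset.mem_powerset.mp hZ)
    have hexmin : ∀ F : Finset (B × S), ∃ Z ⊆ K0,
        G₁ F = p (EX E Z ∪ F) - ∑ m ∈ Z, u m := by
      intro F
      obtain ⟨Z, hZm, hZe⟩ := Finset.exists_mem_eq_inf'
        (⟨∅, Finset.empty_mem_powerset _⟩ : K0.powerset.Nonempty)
        fun Z => p (EX E Z ∪ F) - ∑ m ∈ Z, u m
      exact ⟨Z, Finset.mem_powerset.mp hZm, hZe⟩
    have hclsG : ∀ (Z : Finset B), Z ⊆ K0 → EX E Z ⊆ G := fun Z hZ =>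
      EX_subset_of_classes fun k' hk' => hcls k' (Finset.mem_insert_of_mem (hZ hk'))
    have hdisj : ∀ (Z : Finset B), Z ⊆ K0 → ∀ (F : Finset (B × S)), F ⊆ A →
        ∀ e ∈ F, e ∉ EX E Z := by
      intro Z hZ F hF e heF heX
      rcases Finset.mem_filter.mp (hF heF) with ⟨_, h1⟩
      rcases Finset.mem_filter.mp heX with ⟨_, h2⟩
      exact hk (hZ (h1 ▸ h2))
    have hG₁w : IsMonoSubmodularWeak A G₁ := by
      constructor
      · intro X Y hXY hYA
        obtain ⟨Z, hZ, hZe⟩ := hexmin Y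
        rw [hZe]
        refine le_trans (hG₁le X Z hZ) ?_
        have : p (EX E Z ∪ X) ≤ p (EX E Z ∪ Y) :=
          hpw.1 _ _ (Finset.union_subset_union_right hXY)
            (Finset.union_subset (hclsG Z hZ) ((hYA.trans hAG)))
        linarith
      · intro X Y hXA hYA
        obtain ⟨ZX, hZX, hZXe⟩ := hexmin X
        obtain ⟨ZY, hZY, hZYe⟩ := hexmin Y
        rw [hZXe, hZYe]
        have hint : (EX E ZX ∪ X) ∩ (EX E ZY ∪ Y) = EX E (ZX ∩ ZY) ∪ (X ∩ Y) := by
          rw [EX_inter]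
          ext e
          simp only [Finset.mem_inter, Finset.mem_union]
          constructor
          · rintro ⟨hx | hx, hy | hy⟩
            · exact Or.inl ⟨hx, hy⟩
            · exact absurd hx (hdisj ZX hZX Y hYA e hy)
            · exact absurd hy (hdisj ZY hZY X hXA e hx)
            · exact Or.inr ⟨hx, hy⟩
          · rintro (⟨h1, h2⟩ | ⟨h1, h2⟩)
            · exact ⟨Or.inl h1, Or.inl h2⟩
            · exact ⟨Or.inr h1, Or.inr h2⟩
        have huni : (EX E ZX ∪ X) ∪ (EX E ZY ∪ Y) = EX E (ZX ∪ ZY) ∪ (X ∪ Y) := by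
          rw [EX_union]
          ext e; simp only [Finset.mem_union]; tauto
        have hsubm : p ((EX E ZX ∪ X) ∩ (EX E ZY ∪ Y)) + p ((EX E ZX ∪ X) ∪ (EX E ZY ∪ Y))
            ≤ p (EX E ZX ∪ X) + p (EX E ZY ∪ Y) :=
          hpw.2 _ _ (Finset.union_subset (hclsG ZX hZX) (hXA.trans hAG))
            (Finset.union_subset (hclsG ZY hZY) (hYA.trans hAG))
        rw [hint, huni] at hsubm
        have hI : G₁ (X ∩ Y) ≤ p (EX E (ZX ∩ ZY) ∪ (X ∩ Y)) - ∑ m ∈ ZX ∩ ZY, u m :=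
          hG₁le _ _ ((Finset.inter_subset_left).trans hZX)
        have hU : G₁ (X ∪ Y) ≤ p (EX E (ZX ∪ ZY) ∪ (X ∪ Y)) - ∑ m ∈ ZX ∪ ZY, u m :=
          hG₁le _ _ (Finset.union_subset hZX hZY)
        have hsum : ∑ m ∈ ZX ∪ ZY, u m + ∑ m ∈ ZX ∩ ZY, u m
            = ∑ m ∈ ZX, u m + ∑ m ∈ ZY, u m := Finset.sum_union_inter
        linarith
    have hG₁0 : 0 ≤ G₁ ∅ := by
      refine hle_G₁ ∅ 0 fun Z hZ => ?_
      have := hyp Z (hZ.trans (Finset.subset_insert k K0))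
      rw [Finset.union_empty]
      linarith
    have hG₁p : ∀ F, F ⊆ A → G₁ F ≤ p F := by
      intro F _
      have := hG₁le F ∅ (Finset.empty_subset K0)
      simpa [EX_empty] using this
    have hukA : u k ≤ G₁ A := by
      refine hle_G₁ A (u k) fun Z hZ => ?_
      have hins : EX E Z ∪ A = EX E (insert k Z) := by
        rw [EX_insert, Finset.union_comm]
      have hkZ : k ∉ Z := fun h => hk (hZ h)
      have := hyp (insert k Z) (Finset.insert_subset_insert k hZ)
      rw [Finset.sum_insert hkZ] at this
      rw [hins]
      linarith
    have hceA : A = ∅ → u k ≤ 0 := by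
      intro hAe
      have := hyp {k} (Finset.singleton_subset_iff.mpr hkK)
      rw [Finset.sum_singleton, EX_singleton] at this
      rw [← hA, hAe, hp0] at this
      exact this
    obtain ⟨ξk, hξk0, hξks, hξkF, hξkA⟩ :=
      greedy_scaled A G₁ hG₁w hG₁0 A le_rfl (u k) (hu k hkK) hukA hceA
    have hξkp : ∀ F ⊆ A, ∑ a ∈ F, ξk a ≤ p F := fun F hF =>
      le_trans (hξkF F hF) (hG₁p F hF)
    set p' := ctr p A ξk with hp'
    have hp'w : IsMonoSubmodularWeak (G \ A) p' := ctr_weak hpw hAG ξk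
    have hp'0 : p' ∅ = 0 := ctr_empty (Gr := G) hp0 hξkp
    obtain ⟨y, hy0, hys, hyF, hyK⟩ := ih (G \ A) p'
      (fun k' hk' => by
        intro e he
        rcases Finset.mem_filter.mp he with ⟨h1, h2⟩
        refine Finset.mem_sdiff.mpr ⟨hcls k' (Finset.mem_insert_of_mem hk') he, ?_⟩
        intro hemem
        have hkk' : k = k' := ((Finset.mem_filter.mp hemem).2).symm.trans h2
        exact hk (by rwa [hkk'])
      ) hp'w hp'0 (fun k' hk' => hu k' (Finset.mem_insert_of_mem hk'))
      (fun Z hZ => by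
        refine le_ctr p A ξk (EX E Z) fun F' hF' => ?_
        have h1 : ∑ a ∈ F', ξk a ≤ G₁ F' := hξkF F' hF'
        have h2 := hG₁le F' Z hZ
        linarith)
    refine ⟨fun e => y e + ξk e, fun e => add_nonneg (hy0 e) (hξk0 e), ?_, ?_, ?_⟩
    · intro e he
      show y e + ξk e = 0
      rw [hys e (fun hmem => he (Finset.mem_sdiff.mp hmem).1), hξks e (fun hmem => he (hAG hmem))]
      ring
    · intro F hF
      exact ctr_recover hAG y hys hξks hyF F hF
    · intro k' hk'
      rcases Finset.mem_insert.mp hk' with h | h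
      · subst h
        have h1 : vsum (fun e => y e + ξk e) (Ei E k') = ∑ e ∈ A, y e + ∑ e ∈ A, ξk e := by
          rw [vsum, ← hA, Finset.sum_add_distrib]
        have h2 : ∑ e ∈ A, y e = 0 :=
          Finset.sum_eq_zero fun e he => hys e fun hmem => (Finset.mem_sdiff.mp hmem).2 he
        rw [h1, h2, hξkA]; ring
      · have hdisj2 : ∀ e ∈ Ei E k', ξk e = 0 := by
          intro e he
          refine hξks e fun hmem => ?_
          rcases Finset.mem_filter.mp he with ⟨_, h1⟩
          rcases Finset.mem_filter.mp hmem with ⟨_, h2⟩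
          exact hk (by rwa [show k = k' from h2.symm.trans h1])
        have h1 : vsum (fun e => y e + ξk e) (Ei E k') = ∑ e ∈ Ei E k', y e := by
          rw [vsum, Finset.sum_add_distrib]
          rw [Finset.sum_eq_zero hdisj2]; ring
        rw [h1]
        exact hyK k' h
end LemC


section Generic3
variable {α : Type*} [DecidableEq α]

lemma ctr_exists_min (p : Finset α → ℝ) (A : Finset α) (ξ : α → ℝ) (F : Finset α) :
    ∃ F', F' ⊆ A ∧ ctr p A ξ F = p (F ∪ F') - ∑ a ∈ F', ξ a := by
  obtain ⟨F', hm, he⟩ := Finset.exists_mem_eq_inf'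
    (⟨∅, Finset.empty_mem_powerset A⟩ : A.powerset.Nonempty)
    fun F' => p (F ∪ F') - ∑ a ∈ F', ξ a
  exact ⟨F', Finset.mem_powerset.mp hm, he⟩

end Generic3

section Market2

variable {B S : Type*} [Fintype B] [Fintype S] [DecidableEq B] [DecidableEq S]
variable {E : Finset (B × S)} {fj : S → Finset (B × S) → ℝ} {w : B × S → ℝ} {d : B → ℝ}

lemma Ei_subset (i : B) : Ei E i ⊆ E := Finset.filter_subset _ _

lemma rr_le_single (hfj : ∀ j : S, IsMonoSubmodular (Ej E j) (fj j))
    {j : S} {F : Finset (B × S)} (hF : F ⊆ Ej E j) :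
    rr E fj w F ≤ fj j F - vsum w F := by
  rw [rr, ← Finset.sum_erase_add Finset.univ _ (Finset.mem_univ j)]
  have h1 : ∑ j' ∈ Finset.univ.erase j, rj E fj w j' F ≤ 0 := by
    refine Finset.sum_nonpos fun j' hj' => ?_
    have hne : j' ≠ j := Finset.ne_of_mem_erase hj'
    have hemp : F ∩ Ej E j' = ∅ := by
      rw [Finset.eq_empty_iff_forall_notMem]
      intro e he
      rcases Finset.mem_inter.mp he with ⟨heF, heJ⟩
      have h2 : e.2 = j' := (Finset.mem_filter.mp heJ).2
      have h3 : e.2 = j := (Finset.mem_filter.mp (hF heF)).2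
      exact hne (h2.symm.trans h3)
    have := rj_le (E := E) (fj := fj) (w := w) (j := j') (F := F)
      (Finset.empty_subset _) (by rw [hemp])
    simpa [(hfj j').1, vsum] using this
  have h2 : rj E fj w j F ≤ fj j F - vsum w F := rj_le hF Finset.inter_subset_left
  linarith

lemma memPwd_zero (hw : memP E fj w) (hd : ∀ i : B, 0 ≤ d i) : memPwd E fj w d 0 := by
  refine ⟨fun e => le_rfl, fun e _ => rfl, ?_, fun i => by simp [vsum, hd i]⟩
  have h : w + 0 = w := by funext e; simp
  rw [h]; exact hw

lemma memPwd_le_rr {x : B × S → ℝ} (hx : memPwd E fj w d x) (F : Finset (B × S)) :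
    vsum x F ≤ rr E fj w F := by
  rw [vsum_seller_split hx.2.1 F, rr]
  refine Finset.sum_le_sum fun j _ => ?_
  refine le_rj fun F' h1 h2 => ?_
  have ha : vsum x (F ∩ Ej E j) ≤ vsum x F' :=
    Finset.sum_le_sum_of_subset_of_nonneg h2 fun e _ _ => hx.1 e
  have hb := hx.2.2.1.2.2 j F' h1
  have hc : vsum (w + x) F' = vsum w F' + vsum x F' := by
    simp [vsum, Finset.sum_add_distrib]
  linarith

lemma vsum_le_fwd {x : B × S → ℝ} (hx : memPwd E fj w d x) (F : Finset (B × S)) :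
    vsum x F ≤ fwd E fj w d F := by
  refine le_csSup ⟨rr E fj w F, ?_⟩ ⟨x, hx, rfl⟩
  rintro r ⟨z, hz, rfl⟩
  exact memPwd_le_rr hz F

lemma fwd_le (hw : memP E fj w) (hd : ∀ i : B, 0 ≤ d i) {F : Finset (B × S)} {c : ℝ}
    (h : ∀ x : B × S → ℝ, memPwd E fj w d x → vsum x F ≤ c) : fwd E fj w d F ≤ c := by
  refine csSup_le ⟨0, 0, memPwd_zero hw hd, by simp [vsum]⟩ ?_
  rintro r ⟨z, hz, rfl⟩
  exact h z hz

lemma fwd_le_rr (hw : memP E fj w) (hd : ∀ i : B, 0 ≤ d i) (F : Finset (B × S)) :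
    fwd E fj w d F ≤ rr E fj w F :=
  fwd_le hw hd fun x hx => memPwd_le_rr hx F

lemma fwd_mono (hw : memP E fj w) (hd : ∀ i : B, 0 ≤ d i) {F F2 : Finset (B × S)}
    (h : F ⊆ F2) : fwd E fj w d F ≤ fwd E fj w d F2 :=
  fwd_le hw hd fun x hx => le_trans
    (Finset.sum_le_sum_of_subset_of_nonneg h fun e _ _ => hx.1 e) (vsum_le_fwd hx F2)

lemma fwd_Ei_le_d (hw : memP E fj w) (hd : ∀ i : B, 0 ≤ d i) (m : B) :
    fwd E fj w d (Ei E m) ≤ d m :=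
  fwd_le hw hd fun x hx => hx.2.2.2 m

lemma build_x
    (hfj : ∀ j : S, IsMonoSubmodular (Ej E j) (fj j)) (hw : memP E fj w)
    (hd : ∀ i : B, 0 ≤ d i)
    (i : B) (ξ : B × S → ℝ) (hξ0 : ∀ e, 0 ≤ ξ e) (hξs : ∀ e ∉ Ei E i, ξ e = 0)
    (hξrr : ∀ F ⊆ Ei E i, vsum ξ F ≤ rr E fj w F)
    (hξd : vsum ξ (Ei E i) ≤ d i)
    (u : B → ℝ) (hu0 : ∀ k, 0 ≤ u k)
    (hur : ∀ Z ⊆ Finset.univ.erase i, ∑ k ∈ Z, u k ≤ ctr (rr E fj w) (Ei E i) ξ (EX E Z))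
    (hud : ∀ k, k ≠ i → u k ≤ d k) :
    ∃ x : B × S → ℝ, memPwd E fj w d x ∧ (∀ e ∈ Ei E i, x e = ξ e) ∧
      ∀ k, k ≠ i → vsum x (Ei E k) = u k := by
  have hAE : Ei E i ⊆ E := Ei_subset i
  have hrrweak : IsMonoSubmodularWeak E (rr E fj w) := rr_weak hfj E
  have hrxiw : IsMonoSubmodularWeak (E \ Ei E i) (ctr (rr E fj w) (Ei E i) ξ) :=
    ctr_weak hrrweak hAE ξ
  have hrxi0 : ctr (rr E fj w) (Ei E i) ξ ∅ = 0 :=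
    ctr_empty (Gr := E) (rr_empty hfj hw) hξrr
  obtain ⟨y, hy0, hys, hyF, hyK⟩ := lemC E u (Finset.univ.erase i) (E \ Ei E i)
    (ctr (rr E fj w) (Ei E i) ξ)
    (fun k hk => by
      intro e he
      rcases Finset.mem_filter.mp he with ⟨h1, h2⟩
      refine Finset.mem_sdiff.mpr ⟨h1, fun hmem => ?_⟩
      exact (Finset.ne_of_mem_erase hk) (h2.symm.trans (Finset.mem_filter.mp hmem).2))
    hrxiw hrxi0 (fun k _ => hu0 k) hur
  refine ⟨fun e => y e + ξ e, ?_, ?_, ?_⟩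
  · have hsplit : ∀ F : Finset (B × S), vsum (fun e => y e + ξ e) F = vsum y F + vsum ξ F :=
      fun F => by simp [vsum, Finset.sum_add_distrib]
    have hxrr : ∀ H ⊆ E, vsum (fun e => y e + ξ e) H ≤ rr E fj w H := fun H hH => by
      have := ctr_recover hAE y hys hξs hyF H hH
      simpa [vsum] using this
    refine ⟨fun e => add_nonneg (hy0 e) (hξ0 e), ?_, ⟨?_, ?_, ?_⟩, ?_⟩
    · intro e he
      show y e + ξ e = 0
      rw [hys e fun hmem => he (Finset.mem_sdiff.mp hmem).1, hξs e fun hmem => he (hAE hmem)]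
      ring
    · intro e
      exact add_nonneg (hw.1 e) (add_nonneg (hy0 e) (hξ0 e))
    · intro e he
      have h1 : y e = 0 := hys e fun hmem => he (Finset.mem_sdiff.mp hmem).1
      have h2 : ξ e = 0 := hξs e fun hmem => he (hAE hmem)
      simp [hw.2.1 e he, h1, h2]
    · intro j F hF
      have hFE : F ⊆ E := hF.trans (Finset.filter_subset _ _)
      have h1 := hxrr F hFE
      have h2 : rr E fj w F ≤ fj j F - vsum w F := rr_le_single hfj hF
      have h3 : vsum (w + fun e => y e + ξ e) F = vsum w F + vsum (fun e => y e + ξ e) F := by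
        simp [vsum, Finset.sum_add_distrib]
      linarith
    · intro m
      by_cases hm : m = i
      · subst hm
        have h1 : vsum y (Ei E m) = 0 := Finset.sum_eq_zero fun e he =>
          hys e fun hmem => (Finset.mem_sdiff.mp hmem).2 he
        have := hsplit (Ei E m)
        rw [h1] at this
        rw [this]
        simpa using hξd
      · have h1 : vsum ξ (Ei E m) = 0 := Finset.sum_eq_zero fun e he =>
          hξs e fun hmem =>
            hm (((Finset.mem_filter.mp he).2).symm.trans (Finset.mem_filter.mp hmem).2)
        have h2 : vsum y (Ei E m) = u m :=
          hyK m (Finset.mem_erase.mpr ⟨hm, Finset.mem_univ m⟩)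
        rw [hsplit (Ei E m), h1, h2]
        simpa using hud m hm
  · intro e he
    have h1 : y e = 0 := hys e fun hmem => (Finset.mem_sdiff.mp hmem).2 he
    simp [h1]
  · intro k hk
    have h1 : vsum ξ (Ei E k) = 0 := Finset.sum_eq_zero fun e he =>
      hξs e fun hmem =>
        hk (((Finset.mem_filter.mp he).2).symm.trans (Finset.mem_filter.mp hmem).2)
    have h2 : vsum y (Ei E k) = u k := hyK k (Finset.mem_erase.mpr ⟨hk, Finset.mem_univ k⟩)
    have h3 : vsum (fun e => y e + ξ e) (Ei E k) = vsum y (Ei E k) + vsum ξ (Ei E k) := by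
      simp [vsum, Finset.sum_add_distrib]
    rw [h3, h1, h2]; ring

end Market2


section Phi

variable {B S : Type*} [Fintype B] [Fintype S] [DecidableEq B] [DecidableEq S]
variable {E : Finset (B × S)} {fj : S → Finset (B × S) → ℝ} {w : B × S → ℝ} {d : B → ℝ}

def Phi (E : Finset (B × S)) (fj : S → Finset (B × S) → ℝ) (w : B × S → ℝ) (d : B → ℝ)
    (i : B) (ξ : B × S → ℝ) (Y : Finset B) : ℝ :=
  Y.powerset.inf' ⟨∅, Finset.empty_mem_powerset _⟩
    fun Z => ctr (rr E fj w) (Ei E i) ξ (EX E Z) + ∑ m ∈ Y \ Z, d m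

lemma Phi_le {i : B} {ξ : B × S → ℝ} {Y Z : Finset B} (h : Z ⊆ Y) :
    Phi E fj w d i ξ Y ≤ ctr (rr E fj w) (Ei E i) ξ (EX E Z) + ∑ m ∈ Y \ Z, d m :=
  Finset.inf'_le _ (Finset.mem_powerset.mpr h)

lemma le_Phi {i : B} {ξ : B × S → ℝ} {Y : Finset B} {c : ℝ}
    (h : ∀ Z ⊆ Y, c ≤ ctr (rr E fj w) (Ei E i) ξ (EX E Z) + ∑ m ∈ Y \ Z, d m) :
    c ≤ Phi E fj w d i ξ Y :=
  Finset.le_inf' _ _ fun Z hZ => h Z (Finset.mem_powerset.mp hZ)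

lemma Phi_exists_min (i : B) (ξ : B × S → ℝ) (Y : Finset B) :
    ∃ Z, Z ⊆ Y ∧ Phi E fj w d i ξ Y
      = ctr (rr E fj w) (Ei E i) ξ (EX E Z) + ∑ m ∈ Y \ Z, d m := by
  obtain ⟨Z, hm, he⟩ := Finset.exists_mem_eq_inf'
    (⟨∅, Finset.empty_mem_powerset Y⟩ : Y.powerset.Nonempty)
    fun Z => ctr (rr E fj w) (Ei E i) ξ (EX E Z) + ∑ m ∈ Y \ Z, d m
  exact ⟨Z, Finset.mem_powerset.mp hm, he⟩

lemma Phi_empty (hfj : ∀ j : S, IsMonoSubmodular (Ej E j) (fj j)) (hw : memP E fj w)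
    {i : B} {ξ : B × S → ℝ} (hξrr : ∀ F ⊆ Ei E i, vsum ξ F ≤ rr E fj w F) :
    Phi E fj w d i ξ ∅ = 0 := by
  have hrxi0 : ctr (rr E fj w) (Ei E i) ξ ∅ = 0 :=
    ctr_empty (Gr := E) (rr_empty hfj hw) hξrr
  refine le_antisymm ?_ (le_Phi fun Z hZ => ?_)
  · have := Phi_le (E := E) (fj := fj) (w := w) (d := d) (i := i) (ξ := ξ)
      (Finset.empty_subset (∅ : Finset B))
    simpa [EX_empty, hrxi0] using this
  · rw [Finset.subset_empty.mp hZ]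
    simp [EX_empty, hrxi0]

lemma EX_subset_ground {i : B} {Z : Finset B} (hZ : Z ⊆ Finset.univ.erase i) :
    EX E Z ⊆ E \ Ei E i := by
  intro e he
  rcases Finset.mem_filter.mp he with ⟨h1, h2⟩
  refine Finset.mem_sdiff.mpr ⟨h1, fun hmem => ?_⟩
  exact (Finset.mem_erase.mp (hZ h2)).1 (Finset.mem_filter.mp hmem).2

lemma dsum_le (hd : ∀ m : B, 0 ≤ d m) {P Q P' Q' : Finset B}
    (h1 : P ∪ Q ⊆ P' ∪ Q') (h2 : P ∩ Q ⊆ P' ∩ Q') :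
    ∑ m ∈ P, d m + ∑ m ∈ Q, d m ≤ ∑ m ∈ P', d m + ∑ m ∈ Q', d m := by
  have e1 : ∑ m ∈ P ∪ Q, d m + ∑ m ∈ P ∩ Q, d m = ∑ m ∈ P, d m + ∑ m ∈ Q, d m :=
    Finset.sum_union_inter
  have e2 : ∑ m ∈ P' ∪ Q', d m + ∑ m ∈ P' ∩ Q', d m = ∑ m ∈ P', d m + ∑ m ∈ Q', d m :=
    Finset.sum_union_inter
  have l1 : ∑ m ∈ P ∪ Q, d m ≤ ∑ m ∈ P' ∪ Q', d m :=
    Finset.sum_le_sum_of_subset_of_nonneg h1 fun m _ _ => hd m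
  have l2 : ∑ m ∈ P ∩ Q, d m ≤ ∑ m ∈ P' ∩ Q', d m :=
    Finset.sum_le_sum_of_subset_of_nonneg h2 fun m _ _ => hd m
  linarith

lemma Phi_weak (hfj : ∀ j : S, IsMonoSubmodular (Ej E j) (fj j))
    (hd : ∀ m : B, 0 ≤ d m) {i : B} {ξ : B × S → ℝ} :
    IsMonoSubmodularWeak (Finset.univ.erase i) (Phi E fj w d i ξ) := by
  have hrxiw : IsMonoSubmodularWeak (E \ Ei E i) (ctr (rr E fj w) (Ei E i) ξ) :=
    ctr_weak (rr_weak hfj E) (Ei_subset i) ξ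
  constructor
  · intro A C hAC hC
    obtain ⟨Z, hZC, hZe⟩ := Phi_exists_min (E := E) (fj := fj) (w := w) (d := d) i ξ C
    rw [hZe]
    refine le_trans (Phi_le (Finset.inter_subset_right : Z ∩ A ⊆ A)) ?_
    have m1 : ctr (rr E fj w) (Ei E i) ξ (EX E (Z ∩ A)) ≤
        ctr (rr E fj w) (Ei E i) ξ (EX E Z) :=
      hrxiw.1 _ _ (EX_mono Finset.inter_subset_left) (EX_subset_ground (hZC.trans hC))
    have m2 : ∑ m ∈ A \ (Z ∩ A), d m ≤ ∑ m ∈ C \ Z, d m := by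
      refine Finset.sum_le_sum_of_subset_of_nonneg ?_ fun m _ _ => hd m
      intro m hm
      rcases Finset.mem_sdiff.mp hm with ⟨h1, h2⟩
      exact Finset.mem_sdiff.mpr ⟨hAC h1, fun hz => h2 (Finset.mem_inter.mpr ⟨hz, h1⟩)⟩
    linarith
  · intro A C hA hC
    obtain ⟨ZA, hZA, hZAe⟩ := Phi_exists_min (E := E) (fj := fj) (w := w) (d := d) i ξ A
    obtain ⟨ZC, hZC, hZCe⟩ := Phi_exists_min (E := E) (fj := fj) (w := w) (d := d) i ξ C
    rw [hZAe, hZCe]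
    have hI : Phi E fj w d i ξ (A ∩ C) ≤
        ctr (rr E fj w) (Ei E i) ξ (EX E (ZA ∩ ZC)) + ∑ m ∈ (A ∩ C) \ (ZA ∩ ZC), d m :=
      Phi_le (Finset.inter_subset_inter hZA hZC)
    have hU : Phi E fj w d i ξ (A ∪ C) ≤
        ctr (rr E fj w) (Ei E i) ξ (EX E (ZA ∪ ZC)) + ∑ m ∈ (A ∪ C) \ (ZA ∪ ZC), d m :=
      Phi_le (Finset.union_subset_union hZA hZC)
    have hr : ctr (rr E fj w) (Ei E i) ξ (EX E (ZA ∩ ZC))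
        + ctr (rr E fj w) (Ei E i) ξ (EX E (ZA ∪ ZC))
        ≤ ctr (rr E fj w) (Ei E i) ξ (EX E ZA) + ctr (rr E fj w) (Ei E i) ξ (EX E ZC) := by
      rw [EX_inter, EX_union]
      exact hrxiw.2 _ _ (EX_subset_ground (hZA.trans hA)) (EX_subset_ground (hZC.trans hC))
    have hdsum : ∑ m ∈ (A ∩ C) \ (ZA ∩ ZC), d m + ∑ m ∈ (A ∪ C) \ (ZA ∪ ZC), d m
        ≤ ∑ m ∈ A \ ZA, d m + ∑ m ∈ C \ ZC, d m := by
      refine dsum_le hd ?_ ?_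
      · intro m hm
        rcases Finset.mem_union.mp hm with h | h
        · rcases Finset.mem_sdiff.mp h with ⟨h1, h2⟩
          rcases Finset.mem_inter.mp h1 with ⟨hmA, hmC⟩
          by_cases hz : m ∈ ZA
          · exact Finset.mem_union_right _ (Finset.mem_sdiff.mpr ⟨hmC, fun hzc =>
              h2 (Finset.mem_inter.mpr ⟨hz, hzc⟩)⟩)
          · exact Finset.mem_union_left _ (Finset.mem_sdiff.mpr ⟨hmA, hz⟩)
        · rcases Finset.mem_sdiff.mp h with ⟨h1, h2⟩
          rcases Finset.mem_union.mp h1 with hmA | hmC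
          · exact Finset.mem_union_left _ (Finset.mem_sdiff.mpr ⟨hmA, fun hz =>
              h2 (Finset.mem_union_left _ hz)⟩)
          · exact Finset.mem_union_right _ (Finset.mem_sdiff.mpr ⟨hmC, fun hz =>
              h2 (Finset.mem_union_right _ hz)⟩)
      · intro m hm
        rcases Finset.mem_inter.mp hm with ⟨h1, h2⟩
        rcases Finset.mem_sdiff.mp h1 with ⟨h11, _⟩
        rcases Finset.mem_sdiff.mp h2 with ⟨_, h22⟩
        rcases Finset.mem_inter.mp h11 with ⟨hmA, hmC⟩
        exact Finset.mem_inter.mpr ⟨Finset.mem_sdiff.mpr ⟨hmA, fun hz =>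
          h22 (Finset.mem_union_left _ hz)⟩, Finset.mem_sdiff.mpr ⟨hmC, fun hz =>
          h22 (Finset.mem_union_right _ hz)⟩⟩
    linarith

lemma disjoint_EX_Ei {i : B} {Y : Finset B} (hY : Y ⊆ Finset.univ.erase i)
    {F : Finset (B × S)} (hF : F ⊆ Ei E i) : Disjoint (EX E Y) F := by
  refine Finset.disjoint_left.mpr fun e he1 he2 => ?_
  rcases Finset.mem_filter.mp he1 with ⟨_, h1⟩
  exact (Finset.mem_erase.mp (hY h1)).1 (Finset.mem_filter.mp (hF he2)).2

end Phi


section C1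

variable {B S : Type*} [Fintype B] [Fintype S] [DecidableEq B] [DecidableEq S]
variable {E : Finset (B × S)} {fj : S → Finset (B × S) → ℝ} {w : B × S → ℝ} {d : B → ℝ}

lemma hfun_eq_Phi
    (hfj : ∀ j : S, IsMonoSubmodular (Ej E j) (fj j)) (hw : memP E fj w)
    (hd : ∀ m : B, 0 ≤ d m) (i : B) (ξ : B × S → ℝ)
    (hξ0 : ∀ e, 0 ≤ ξ e) (hξs : ∀ e ∉ Ei E i, ξ e = 0)
    (hξf : ∀ F ⊆ Ei E i, vsum ξ F ≤ fwd E fj w d F)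
    {Y : Finset B} (hY : Y ⊆ Finset.univ.erase i) :
    (Ei E i).powerset.inf' ⟨∅, Finset.empty_mem_powerset _⟩
      (fun F => fwd E fj w d (EX E Y ∪ F) - vsum ξ F) = Phi E fj w d i ξ Y := by
  have hξrr : ∀ F ⊆ Ei E i, vsum ξ F ≤ rr E fj w F :=
    fun F hF => (hξf F hF).trans (fwd_le_rr hw hd F)
  have hξd : vsum ξ (Ei E i) ≤ d i := (hξf _ subset_rfl).trans (fwd_Ei_le_d hw hd i)
  refine le_antisymm ?_ ?_
  · obtain ⟨Z, hZY, hZe⟩ := Phi_exists_min (E := E) (fj := fj) (w := w) (d := d) i ξ Y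
    obtain ⟨F', hF'A, hF'e⟩ := ctr_exists_min (rr E fj w) (Ei E i) ξ (EX E Z)
    rw [hZe, hF'e]
    refine le_trans (Finset.inf'_le _ (Finset.mem_powerset.mpr hF'A)) ?_
    have key : fwd E fj w d (EX E Y ∪ F') ≤ rr E fj w (EX E Z ∪ F') + ∑ m ∈ Y \ Z, d m := by
      refine fwd_le hw hd fun x hx => ?_
      have hsplitset : EX E Y ∪ F' = (EX E Z ∪ F') ∪ EX E (Y \ Z) := by
        ext e
        simp only [Finset.mem_union, EX, Finset.mem_filter, Finset.mem_sdiff]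
        constructor
        · rintro (⟨he, hy⟩ | hf)
          · by_cases hz : e.1 ∈ Z
            · exact Or.inl (Or.inl ⟨he, hz⟩)
            · exact Or.inr ⟨he, hy, hz⟩
          · exact Or.inl (Or.inr hf)
        · rintro ((⟨he, hz⟩ | hf) | ⟨he, hy, _⟩)
          · exact Or.inl ⟨he, hZY hz⟩
          · exact Or.inr hf
          · exact Or.inl ⟨he, hy⟩
      have hdisj : Disjoint (EX E Z ∪ F') (EX E (Y \ Z)) := by
        rw [Finset.disjoint_union_left]
        constructor
        · refine Finset.disjoint_left.mpr fun e h1 h2 => ?_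
          exact (Finset.mem_sdiff.mp (Finset.mem_filter.mp h2).2).2
            (Finset.mem_filter.mp h1).2
        · exact (disjoint_EX_Ei ((Finset.sdiff_subset).trans hY) hF'A).symm
      have e1 : vsum x (EX E Y ∪ F') = vsum x (EX E Z ∪ F') + vsum x (EX E (Y \ Z)) := by
        rw [hsplitset]
        simp only [vsum]
        exact Finset.sum_union hdisj
      have b1 : vsum x (EX E Z ∪ F') ≤ rr E fj w (EX E Z ∪ F') := memPwd_le_rr hx _
      have b2 : vsum x (EX E (Y \ Z)) ≤ ∑ m ∈ Y \ Z, d m := by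
        rw [vsum_buyer_split]
        exact Finset.sum_le_sum fun m _ => hx.2.2.2 m
      linarith
    have hv : vsum ξ F' = ∑ a ∈ F', ξ a := rfl
    linarith
  · refine Finset.le_inf' _ _ fun F hFm => ?_
    have hF : F ⊆ Ei E i := Finset.mem_powerset.mp hFm
    obtain ⟨us, hus0, huss, husF, husY⟩ := greedy_exists (Finset.univ.erase i)
      (Phi E fj w d i ξ) (Phi_weak hfj hd) (Phi_empty hfj hw hξrr) Y hY
    have hrxi0 : ctr (rr E fj w) (Ei E i) ξ ∅ = 0 :=
      ctr_empty (Gr := E) (rr_empty hfj hw) hξrr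
    obtain ⟨x, hx, hxξ, hxk⟩ := build_x hfj hw hd i ξ hξ0 hξs hξrr hξd us hus0
      (fun Z hZ => by
        have h1 := husF Z hZ
        have h2 := Phi_le (E := E) (fj := fj) (w := w) (d := d) (i := i) (ξ := ξ)
          (le_refl Z)
        rw [Finset.sdiff_self, Finset.sum_empty] at h2
        linarith)
      (fun k hk => by
        have hkm : ({k} : Finset B) ⊆ Finset.univ.erase i :=
          Finset.singleton_subset_iff.mpr (Finset.mem_erase.mpr ⟨hk, Finset.mem_univ k⟩)
        have h1 := husF {k} hkm
        have h2 := Phi_le (E := E) (fj := fj) (w := w) (d := d) (i := i) (ξ := ξ)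
          (Finset.empty_subset ({k} : Finset B))
        rw [EX_empty, hrxi0, Finset.sdiff_empty, Finset.sum_singleton] at h2
        rw [Finset.sum_singleton] at h1
        linarith)
    have e1 : vsum x (EX E Y ∪ F) = vsum x (EX E Y) + vsum x F := by
      simp only [vsum]
      exact Finset.sum_union (disjoint_EX_Ei hY hF)
    have e2 : vsum x (EX E Y) = ∑ m ∈ Y, us m := by
      rw [vsum_buyer_split]
      exact Finset.sum_congr rfl fun m hm => hxk m (Finset.mem_erase.mp (hY hm)).1
    have e3 : vsum x F = vsum ξ F := Finset.sum_congr rfl fun e he => hxξ e (hF he)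
    have b := vsum_le_fwd hx (EX E Y ∪ F)
    rw [← husY, ← e2]
    linarith

end C1


/-- `P^i_{w,d}(ξ)` is nonempty iff `h^i_ξ ≥ 0`; in that case `h^i_ξ`
is monotone submodular on `N - i` and `P^i_{w,d}(ξ)` is its polymatroid, where
`h^i_ξ(Y) = min_{F ⊆ E_i} (f_{w,d}(E_Y ∪ F) - ξ(F))`. -/
theorem PiWd_is_polymatroid
    (E : Finset (B × S)) (fj : S → Finset (B × S) → ℝ)
    (hfj : ∀ j : S, IsMonoSubmodular (Ej E j) (fj j))
    (w : B × S → ℝ) (hw : memP E fj w)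
    (d : B → ℝ) (hd : ∀ i : B, 0 ≤ d i)
    (i : B) (ξ : B × S → ℝ) (hξ0 : ∀ e, 0 ≤ ξ e) (hξs : ∀ e ∉ Ei E i, ξ e = 0) :
    ((PiWd E fj w d i ξ).Nonempty ↔
      ∀ Y ⊆ Finset.univ.erase i,
        0 ≤ (Ei E i).powerset.inf' ⟨∅, Finset.empty_mem_powerset _⟩
          (fun F => fwd E fj w d (EX E Y ∪ F) - vsum ξ F)) ∧
    ((PiWd E fj w d i ξ).Nonempty →
      IsMonoSubmodular (Finset.univ.erase i)
        (fun Y => (Ei E i).powerset.inf' ⟨∅, Finset.empty_mem_powerset _⟩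
          (fun F => fwd E fj w d (EX E Y ∪ F) - vsum ξ F)) ∧
      PiWd E fj w d i ξ =
        {u : B → ℝ | u i = 0 ∧ (∀ k, 0 ≤ u k) ∧
          ∀ Y ⊆ Finset.univ.erase i,
            ∑ k ∈ Y, u k ≤ (Ei E i).powerset.inf' ⟨∅, Finset.empty_mem_powerset _⟩
              (fun F => fwd E fj w d (EX E Y ∪ F) - vsum ξ F)}) := by
  have hEiE : Ei E i ⊆ E := Ei_subset i
  have mem_xi_fwd : ∀ u ∈ PiWd E fj w d i ξ, ∀ F ⊆ Ei E i,
      vsum ξ F ≤ fwd E fj w d F := by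
    rintro u ⟨hui, hu0, x, hx, hxξ, hxk⟩ F hF
    have h1 : vsum ξ F = vsum x F := Finset.sum_congr rfl fun e he => (hxξ e (hF he)).symm
    rw [h1]
    exact vsum_le_fwd hx F
  constructor
  · constructor
    · rintro ⟨u, hu⟩ Y hY
      obtain ⟨hui, hu0, x, hx, hxξ, hxk⟩ := hu
      refine Finset.le_inf' _ _ fun F hFm => ?_
      have hF := Finset.mem_powerset.mp hFm
      have h1 : vsum ξ F = vsum x F := Finset.sum_congr rfl fun e he => (hxξ e (hF he)).symm
      have h2 : vsum x F ≤ vsum x (EX E Y ∪ F) :=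
        Finset.sum_le_sum_of_subset_of_nonneg Finset.subset_union_right fun e _ _ => hx.1 e
      have h3 := vsum_le_fwd hx (EX E Y ∪ F)
      rw [h1]; linarith
    · intro hpos
      have hξf : ∀ F ⊆ Ei E i, vsum ξ F ≤ fwd E fj w d F := by
        intro F hF
        have h1 := hpos ∅ (Finset.empty_subset _)
        have h2 : (Ei E i).powerset.inf' ⟨∅, Finset.empty_mem_powerset _⟩
            (fun F => fwd E fj w d (EX E (∅ : Finset B) ∪ F) - vsum ξ F)
            ≤ fwd E fj w d (EX E (∅ : Finset B) ∪ F) - vsum ξ F :=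
          Finset.inf'_le _ (Finset.mem_powerset.mpr hF)
        simp only [EX_empty, Finset.empty_union] at h1 h2
        linarith
      have hξrr : ∀ F ⊆ Ei E i, vsum ξ F ≤ rr E fj w F :=
        fun F hF => (hξf F hF).trans (fwd_le_rr hw hd F)
      have hξd : vsum ξ (Ei E i) ≤ d i := (hξf _ subset_rfl).trans (fwd_Ei_le_d hw hd i)
      have hrxiw : IsMonoSubmodularWeak (E \ Ei E i) (ctr (rr E fj w) (Ei E i) ξ) :=
        ctr_weak (rr_weak hfj E) hEiE ξ
      have hrxi0 : ctr (rr E fj w) (Ei E i) ξ ∅ = 0 :=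
        ctr_empty (Gr := E) (rr_empty hfj hw) hξrr
      obtain ⟨x, hx, hxξ, hxk⟩ := build_x hfj hw hd i ξ hξ0 hξs hξrr hξd (fun _ => 0)
        (fun k => le_rfl)
        (fun Z hZ => by
          have h1 : ctr (rr E fj w) (Ei E i) ξ ∅ ≤ ctr (rr E fj w) (Ei E i) ξ (EX E Z) :=
            hrxiw.1 ∅ (EX E Z) (Finset.empty_subset _) (EX_subset_ground hZ)
          rw [hrxi0] at h1
          simpa using h1)
        (fun k _ => hd k)
      exact ⟨fun _ => 0, rfl, fun k => le_rfl, x, hx, hxξ, fun k hk => hxk k hk⟩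
  · intro hne
    obtain ⟨u₀, hu₀⟩ := hne
    have hξf : ∀ F ⊆ Ei E i, vsum ξ F ≤ fwd E fj w d F := mem_xi_fwd u₀ hu₀
    have hξrr : ∀ F ⊆ Ei E i, vsum ξ F ≤ rr E fj w F :=
      fun F hF => (hξf F hF).trans (fwd_le_rr hw hd F)
    have hξd : vsum ξ (Ei E i) ≤ d i := (hξf _ subset_rfl).trans (fwd_Ei_le_d hw hd i)
    have hrxi0 : ctr (rr E fj w) (Ei E i) ξ ∅ = 0 :=
      ctr_empty (Gr := E) (rr_empty hfj hw) hξrr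
    have hC1 : ∀ Y, Y ⊆ Finset.univ.erase i →
        (Ei E i).powerset.inf' ⟨∅, Finset.empty_mem_powerset _⟩
          (fun F => fwd E fj w d (EX E Y ∪ F) - vsum ξ F) = Phi E fj w d i ξ Y :=
      fun Y hY => hfun_eq_Phi hfj hw hd i ξ hξ0 hξs hξf hY
    constructor
    · refine ⟨?_, ?_, ?_⟩
      · beta_reduce
        rw [hC1 ∅ (Finset.empty_subset _), Phi_empty hfj hw hξrr]
      · intro A C hAC hC
        beta_reduce
        rw [hC1 A (hAC.trans hC), hC1 C hC]
        exact (Phi_weak hfj hd).1 A C hAC hC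
      · intro A C hA hC
        beta_reduce
        rw [hC1 A hA, hC1 C hC, hC1 (A ∩ C) ((Finset.inter_subset_left).trans hA),
          hC1 (A ∪ C) (Finset.union_subset hA hC)]
        exact (Phi_weak hfj hd).2 A C hA hC
    · ext u
      simp only [PiWd, Set.mem_setOf_eq]
      constructor
      · rintro ⟨hui, hu0, x, hx, hxξ, hxk⟩
        refine ⟨hui, hu0, fun Y hY => ?_⟩
        refine Finset.le_inf' _ _ fun F hFm => ?_
        have hF := Finset.mem_powerset.mp hFm
        have e1 : vsum x (EX E Y ∪ F) = vsum x (EX E Y) + vsum x F := by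
          simp only [vsum]
          exact Finset.sum_union (disjoint_EX_Ei hY hF)
        have e2 : vsum x (EX E Y) = ∑ m ∈ Y, u m := by
          rw [vsum_buyer_split]
          exact Finset.sum_congr rfl fun m hm => hxk m (Finset.mem_erase.mp (hY hm)).1
        have e3 : vsum x F = vsum ξ F := Finset.sum_congr rfl fun e he => hxξ e (hF he)
        have b := vsum_le_fwd hx (EX E Y ∪ F)
        linarith
      · rintro ⟨hui, hu0, hup⟩
        refine ⟨hui, hu0, ?_⟩
        obtain ⟨x, hx, hxξ, hxk⟩ := build_x hfj hw hd i ξ hξ0 hξs hξrr hξd u hu0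
          (fun Z hZ => by
            have h1 := hup Z hZ
            rw [hC1 Z hZ] at h1
            have h2 := Phi_le (E := E) (fj := fj) (w := w) (d := d) (i := i) (ξ := ξ)
              (le_refl Z)
            rw [Finset.sdiff_self, Finset.sum_empty] at h2
            linarith)
          (fun k hk => by
            have hkm : ({k} : Finset B) ⊆ Finset.univ.erase i :=
              Finset.singleton_subset_iff.mpr (Finset.mem_erase.mpr ⟨hk, Finset.mem_univ k⟩)
            have h1 := hup {k} hkm
            rw [hC1 {k} hkm, Finset.sum_singleton] at h1
            have h2 := Phi_le (E := E) (fj := fj) (w := w) (d := d) (i := i) (ξ := ξ)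
              (Finset.empty_subset ({k} : Finset B))
            rw [EX_empty, hrxi0, Finset.sdiff_empty, Finset.sum_singleton] at h2
            linarith)
        exact ⟨x, hx, hxξ, hxk⟩

end TwoSidedMarket
end
end
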